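/- arXiv:1309.3656 — 7 statements merged into one kernel-verified Lean document; each statement's English description precedes it below -/
import Mathlib

section
/- Let X be a topological vector space over ℝ or ℂ, and let A, B ⊆ X with A + B ⊆ A (A is stronger than B) and B ∪ {0} containing a dense vector subspace of X. If A ∪ {0} contains a vector subspace of dimension α (an infinite cardinal) and X has an open basis 𝓑 for its topology with card(𝓑) ≤ α, then A ∪ {0} contains a dense vector subspace of X. If additionally A ∩ B = ∅, then A ∪ {0} contains a dense vector subspace D with dim(D) = α. -/
open Cardinal Pointwise
open scoped Topology

theorem stmt0 {X : Type} [AddCommGroup X] [Module ℝ X] [TopologicalSpace X]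
    [IsTopologicalAddGroup X] [ContinuousSMul ℝ X]
    (A B : Set X) (hAB : A + B ⊆ A)
    (hB : ∃ M : Submodule ℝ X, (M : Set X) ⊆ B ∪ {0} ∧ Dense (M : Set X))
    (α : Cardinal) (hα : ℵ₀ ≤ α)
    (hA : ∃ M : Submodule ℝ X, (M : Set X) ⊆ A ∪ {0} ∧ Module.rank ℝ M = α)
    (h𝓑 : ∃ 𝓑 : Set (Set X), TopologicalSpace.IsTopologicalBasis 𝓑 ∧ #𝓑 ≤ α) :
    (∃ D : Submodule ℝ X, (D : Set X) ⊆ A ∪ {0} ∧ Dense (D : Set X)) ∧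
    (A ∩ B = ∅ → ∃ D : Submodule ℝ X, (D : Set X) ⊆ A ∪ {0} ∧ Dense (D : Set X) ∧
      Module.rank ℝ D = α) := by
  classical
  obtain ⟨MB, hMBsub, hMBdense⟩ := hB
  obtain ⟨MA, hMAsub, hMArank⟩ := hA
  obtain ⟨𝓑, hbasis, hcard⟩ := h𝓑
  -- a basis of MA, viewed inside X
  set ι := Module.Basis.ofVectorSpaceIndex ℝ MA with hιdef
  set v := Module.Basis.ofVectorSpace ℝ MA with hvdef
  have hι : #ι = α := by rw [← hMArank]; exact v.mk_eq_rank''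
  set x : ι → X := fun i => (v i : X) with hxdef
  have hxli : LinearIndependent ℝ x :=
    v.linearIndependent.map' MA.subtype MA.ker_subtype
  have hxMA : ∀ i, x i ∈ MA := fun i => (v i).2
  -- nonempty basic open sets
  set J := {U : Set X // U ∈ 𝓑 ∧ U.Nonempty} with hJdef
  have hJcard : #J ≤ #ι := by
    rw [hι]
    refine le_trans ?_ hcard
    exact Cardinal.mk_le_mk_of_subset (by intro U hU; exact hU.1)
  obtain ⟨f⟩ := (Cardinal.le_def _ _).mp hJcard
  -- choice of points
  have key : ∀ U : J, ∃ p : X × ℝ, p.1 ∈ MB ∧ p.2 ≠ 0 ∧ p.1 + p.2 • x (f U) ∈ U.1 := by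
    rintro ⟨U, hU𝓑, hUne⟩
    obtain ⟨b, hbMB, hbU⟩ := hMBdense.exists_mem_open (hbasis.isOpen hU𝓑) hUne
    have hcont : Continuous fun s : ℝ => b + s • x (f ⟨U, hU𝓑, hUne⟩) :=
      continuous_const.add (continuous_id.smul continuous_const)
    have hV : IsOpen ((fun s : ℝ => b + s • x (f ⟨U, hU𝓑, hUne⟩)) ⁻¹' U) :=
      (hbasis.isOpen hU𝓑).preimage hcont
    have h0 : (0 : ℝ) ∈ (fun s : ℝ => b + s • x (f ⟨U, hU𝓑, hUne⟩)) ⁻¹' U := by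
      simp [hbU]
    have hmemnhds : ((fun s : ℝ => b + s • x (f ⟨U, hU𝓑, hUne⟩)) ⁻¹' U) ∈ 𝓝[≠] (0 : ℝ) :=
      nhdsWithin_le_nhds (hV.mem_nhds h0)
    have : (((fun s : ℝ => b + s • x (f ⟨U, hU𝓑, hUne⟩)) ⁻¹' U) ∩ {(0:ℝ)}ᶜ).Nonempty :=
      Filter.nonempty_of_mem (Filter.inter_mem hmemnhds self_mem_nhdsWithin)
    obtain ⟨s, hsU, hs0⟩ := this
    exact ⟨(b, s), hbMB, hs0, hsU⟩
  choose p hpMB hpne hpmem using key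
  -- the index type and the generating family
  set κ := ((Set.range ⇑f)ᶜ : Set ι) with hκdef
  set e : J ⊕ κ → X := Sum.elim (fun U => (p U).1 + (p U).2 • x (f U)) (fun i => x i.1)
    with hedef
  set e' : J ⊕ κ → X := Sum.elim (fun U => (p U).2 • x (f U)) (fun i => x i.1) with he'def
  set msel : J ⊕ κ → X := Sum.elim (fun U => (p U).1) (fun _ => 0) with hmseldef
  have hee' : ∀ j, e j = e' j + msel j := by
    rintro (U | i) <;> simp [hedef, he'def, hmseldef, add_comm]
  -- e' is linearly independent
  set ι' : J ⊕ κ → ι := Sum.elim (fun U => f U) (fun i => i.1) with hι'def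
  have hι'inj : Function.Injective ι' := by
    rintro (U₁ | i₁) (U₂ | i₂) h <;> simp only [hι'def, Sum.elim_inl, Sum.elim_inr] at h
    · exact congrArg Sum.inl (f.injective h)
    · exact absurd ⟨U₁, h⟩ i₂.2
    · exact absurd ⟨U₂, h.symm⟩ i₁.2
    · exact congrArg Sum.inr (Subtype.ext h)
  set w : J ⊕ κ → ℝˣ := Sum.elim (fun U => Units.mk0 ((p U).2) (hpne U)) (fun _ => 1)
    with hwdef
  have he'li : LinearIndependent ℝ e' := by
    have h1 : LinearIndependent ℝ (x ∘ ι') := hxli.comp ι' hι'inj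
    have h2 := h1.units_smul w
    have hfun : w • (x ∘ ι') = e' := by
      funext j
      show w j • (x ∘ ι') j = e' j
      rcases j with U | i <;>
        simp [he'def, hwdef, hι'def, Units.smul_def]
    rwa [hfun] at h2
  have he'MA : ∀ j, e' j ∈ MA := by
    rintro (U | i) <;> simp only [he'def, Sum.elim_inl, Sum.elim_inr]
    · exact MA.smul_mem _ (hxMA _)
    · exact hxMA _
  have hmselMB : ∀ j, msel j ∈ MB := by
    rintro (U | i) <;> simp only [hmseldef, Sum.elim_inl, Sum.elim_inr]
    · exact hpMB U
    · exact MB.zero_mem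
  -- decomposition of elements of the span
  have hdecomp : ∀ c : (J ⊕ κ) →₀ ℝ,
      (c.sum fun j a => a • e j) = (c.sum fun j a => a • e' j) + (c.sum fun j a => a • msel j) := by
    intro c
    rw [← Finsupp.sum_add]
    exact Finsupp.sum_congr fun j _ => by rw [hee' j, smul_add]
  have haMA : ∀ c : (J ⊕ κ) →₀ ℝ, (c.sum fun j a => a • e' j) ∈ MA := fun c =>
    Submodule.sum_mem _ fun j _ => MA.smul_mem _ (he'MA j)
  have hmMB : ∀ c : (J ⊕ κ) →₀ ℝ, (c.sum fun j a => a • msel j) ∈ MB := fun c =>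
    Submodule.sum_mem _ fun j _ => MB.smul_mem _ (hmselMB j)
  have hane : ∀ c : (J ⊕ κ) →₀ ℝ, c ≠ 0 → (c.sum fun j a => a • e' j) ≠ 0 := by
    intro c hc h0
    exact hc (linearIndependent_iff.mp he'li c (by rwa [Finsupp.linearCombination_apply]))
  -- the dense subspace
  set D := Submodule.span ℝ (Set.range e) with hDdef
  have hDsub : (D : Set X) ⊆ A ∪ {0} := by
    intro y hy
    obtain ⟨c, rfl⟩ := Finsupp.mem_span_range_iff_exists_finsupp.mp hy
    by_cases hc : c = 0
    · right; simp [hc]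
    · left
      rw [hdecomp c]
      have haA : (c.sum fun j a => a • e' j) ∈ A := by
        rcases hMAsub (haMA c) with h | h
        · exact h
        · exact absurd h (hane c hc)
      rcases hMBsub (hmMB c) with h | h
      · exact hAB (Set.add_mem_add haA h)
      · rw [Set.mem_singleton_iff] at h
        rw [h, add_zero]
        exact haA
  have hDdense : Dense (D : Set X) := by
    rw [hbasis.dense_iff]
    intro o ho hone
    refine ⟨e (Sum.inl ⟨o, ho, hone⟩), hpmem ⟨o, ho, hone⟩, ?_⟩
    exact Submodule.subset_span (Set.mem_range_self _)
  refine ⟨⟨D, hDsub, hDdense⟩, fun hdisj => ⟨D, hDsub, hDdense, ?_⟩⟩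
  -- linear independence of e under disjointness
  have heli : LinearIndependent ℝ e := by
    rw [linearIndependent_iff]
    intro c hc
    by_contra hc0
    rw [Finsupp.linearCombination_apply, hdecomp c] at hc
    have h1 : (c.sum fun j a => a • e' j) = -(c.sum fun j a => a • msel j) :=
      eq_neg_of_add_eq_zero_left hc
    have haA : (c.sum fun j a => a • e' j) ∈ A := by
      rcases hMAsub (haMA c) with h | h
      · exact h
      · exact absurd h (hane c hc0)
    have haB : (c.sum fun j a => a • e' j) ∈ B := by
      have : (c.sum fun j a => a • e' j) ∈ MB := by
        rw [h1]; exact MB.neg_mem (hmMB c)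
      rcases hMBsub this with h | h
      · exact h
      · exact absurd h (hane c hc0)
    exact Set.eq_empty_iff_forall_notMem.mp hdisj _ ⟨haA, haB⟩
  have hJκ : #(J ⊕ κ) = α := by
    rw [← Cardinal.add_def, ← Cardinal.mk_range_eq ⇑f f.injective, hκdef,
      Cardinal.mk_sum_compl (Set.range ⇑f), hι]
  have h1 := rank_span heli
  rwa [Cardinal.mk_range_eq e heli.injective, hJκ] at h1
end

section
/- Let X be a metrizable separable topological vector space, let A, B ⊆ X with A + B ⊆ A, B dense-lineable, A ∩ B = ∅, and suppose A is α-lineable for some infinite cardinal α. Then A ∪ {0} contains a dense vector subspace D with dim(D) = α. -/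
set_option maxHeartbeats 1000000
set_option synthInstance.maxHeartbeats 1000000


open Cardinal Pointwise

theorem stmt1 {X : Type} [AddCommGroup X] [Module ℝ X] [TopologicalSpace X]
    [IsTopologicalAddGroup X] [ContinuousSMul ℝ X]
    [TopologicalSpace.MetrizableSpace X] [TopologicalSpace.SeparableSpace X]
    (A B : Set X) (hAB : A + B ⊆ A)
    (hB : ∃ M : Submodule ℝ X, (M : Set X) ⊆ B ∪ {0} ∧ Dense (M : Set X))
    (hdisj : A ∩ B = ∅)
    (α : Cardinal) (hα : ℵ₀ ≤ α)
    (hA : ∃ M : Submodule ℝ X, (M : Set X) ⊆ A ∪ {0} ∧ Module.rank ℝ M = α) :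
    ∃ D : Submodule ℝ X, (D : Set X) ⊆ A ∪ {0} ∧ Dense (D : Set X) ∧
      Module.rank ℝ D = α := by
  letI : MetricSpace X := TopologicalSpace.metrizableSpaceMetric X
  haveI : SecondCountableTopology X :=
    UniformSpace.secondCountable_of_separable X
  obtain ⟨MB, hMB, hMBdense⟩ := hB
  obtain ⟨MA, hMA, hMArank⟩ := hA
  -- the two subspaces are disjoint
  have hdAB : Disjoint MA MB := by
    rw [Submodule.disjoint_def]
    intro x hxA hxB
    by_contra hx0
    have hA' : x ∈ A := (hMA hxA).resolve_right (by simpa using hx0)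
    have hB' : x ∈ B := (hMB hxB).resolve_right (by simpa using hx0)
    have : x ∈ A ∩ B := ⟨hA', hB'⟩
    rw [hdisj] at this
    exact this
  -- a countable dense sequence inside MB
  obtain ⟨t, htMB, htc, htd⟩ := hMBdense.exists_countable_dense_subset
  have htne : t.Nonempty := htd.nonempty
  obtain ⟨v0, hv0⟩ := htc.exists_surjective htne
  set v : ℕ → X := fun n => (v0 n : X) with hvdef
  have hvt : ∀ n, v n ∈ t := fun n => (v0 n).2
  have hvMB : ∀ n, v n ∈ MB := fun n => htMB (hvt n)
  -- a basis of MA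
  set b := Module.Basis.ofVectorSpace ℝ MA with hb
  set ι := ↥(Module.Basis.ofVectorSpaceIndex ℝ MA) with hι
  set u : ι → X := fun i => (b i : X) with hu
  have huli : LinearIndependent ℝ u :=
    b.linearIndependent.map' MA.subtype (Submodule.ker_subtype MA)
  have huMA : ∀ i, u i ∈ MA := fun i => (b i).2
  have hcardι : #ι = α := by
    rw [b.mk_eq_rank'', hMArank]
  -- an embedding of ℕ × ℕ into ι
  have hembn : ℵ₀ ≤ #ι := by rw [hcardι]; exact hα
  have : #(ℕ × ℕ) ≤ #ι := by
    simpa using hembn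
  obtain ⟨f⟩ := Cardinal.le_def _ _ |>.mp this
  -- choose small scalars
  have hex : ∀ p : ℕ × ℕ, ∃ c : ℝ, c ≠ 0 ∧
      dist (c • u (f p) + v p.1) (v p.1) < 1 / (p.2 + 1) := by
    intro p
    have hcont : Filter.Tendsto (fun c : ℝ => c • u (f p) + v p.1) (nhds 0)
        (nhds (v p.1)) := by
      have h1 : Filter.Tendsto (fun c : ℝ => c • u (f p)) (nhds 0) (nhds 0) := by
        simpa using (Filter.tendsto_id (x := nhds (0:ℝ))).smul_const (u (f p))
      simpa using h1.add (tendsto_const_nhds (x := v p.1))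
    have hpos : (0:ℝ) < 1 / (p.2 + 1) := by positivity
    have h2 : ∀ᶠ c : ℝ in nhdsWithin 0 {(0:ℝ)}ᶜ,
        dist (c • u (f p) + v p.1) (v p.1) < 1 / (p.2 + 1) := by
      apply Filter.Eventually.filter_mono nhdsWithin_le_nhds
      have := hcont.eventually (Metric.ball_mem_nhds (v p.1) hpos)
      filter_upwards [this] with c hc
      simpa [Metric.mem_ball] using hc
    have h3 : ∀ᶠ c : ℝ in nhdsWithin 0 {(0:ℝ)}ᶜ, c ≠ 0 := by
      filter_upwards [self_mem_nhdsWithin] with c hc using hc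
    obtain ⟨c, hc1, hc2⟩ := (h3.and h2).exists
    exact ⟨c, hc1, hc2⟩
  choose ε hε0 hεd using hex
  -- the generating family
  set S : Set ι := (Set.range ⇑f)ᶜ with hS
  set g : ↥S ⊕ ℕ × ℕ → X :=
    Sum.elim (fun i => u i) (fun p => ε p • u (f p) + v p.1) with hg
  set e : ↥S ⊕ ℕ × ℕ → ι := Sum.elim Subtype.val ⇑f with he
  have heinj : Function.Injective e := by
    rintro (i | p) (j | q) h
    · exact congrArg Sum.inl (Subtype.ext (by simpa [he] using h))
    · exact absurd ⟨q, (by simpa [he] using h : (i : ι) = f q).symm⟩ i.2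
    · exact absurd ⟨p, (by simpa [he] using h : f p = (j : ι))⟩ j.2
    · exact congrArg Sum.inr (f.injective (by simpa [he] using h))
  set q := MB.mkQ with hq
  have hqu : LinearIndependent ℝ (⇑q ∘ u) := by
    refine huli.map ?_
    rw [Submodule.ker_mkQ]
    exact hdAB.mono_left (Submodule.span_le.mpr (Set.range_subset_iff.mpr huMA))
  set w : ↥S ⊕ ℕ × ℕ → ℝˣ :=
    Sum.elim (fun _ => 1) (fun p => Units.mk0 (ε p) (hε0 p)) with hw
  have hque : LinearIndependent ℝ (⇑q ∘ u ∘ e) := hqu.comp e heinj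
  have key : ⇑q ∘ g = w • (⇑q ∘ u ∘ e) := by
    funext j
    rcases j with i | p
    · simp [hg, he, hw]
    · have : q (v p.1) = 0 := (Submodule.Quotient.mk_eq_zero MB).mpr (hvMB p.1)
      simp [hg, he, hw, this]
  have hqg : LinearIndependent ℝ (⇑q ∘ g) := by
    rw [key]; exact hque.units_smul w
  have hgli : LinearIndependent ℝ g := hqg.of_comp q
  set D : Submodule ℝ X := Submodule.span ℝ (Set.range g) with hD
  -- D is disjoint from MB
  have hDMB : Disjoint D MB := by
    have := Submodule.range_ker_disjoint hqg
    rwa [Submodule.ker_mkQ] at this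
  -- D ≤ MA ⊔ MB
  have hDle : D ≤ MA ⊔ MB := by
    rw [hD, Submodule.span_le]
    rintro x ⟨i | p, rfl⟩
    · exact Submodule.mem_sup_left (huMA _)
    · exact Submodule.add_mem _ (Submodule.mem_sup_left (MA.smul_mem _ (huMA _)))
        (Submodule.mem_sup_right (hvMB _))
  refine ⟨D, ?_, ?_, ?_⟩
  · -- D ⊆ A ∪ {0}
    intro x hxD
    by_cases hx0 : x = 0
    · exact Or.inr (by simp [hx0])
    left
    obtain ⟨a, haMA, bb, hbMB, hab⟩ := Submodule.mem_sup.mp (hDle hxD)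
    have ha0 : a ≠ 0 := by
      rintro rfl
      rw [zero_add] at hab
      exact hx0 (Submodule.disjoint_def.mp hDMB x hxD (hab ▸ hbMB))
    have haA : a ∈ A := (hMA haMA).resolve_right (by simpa using ha0)
    rcases hMB hbMB with hbB | hb0
    · exact hab ▸ hAB (Set.add_mem_add haA hbB)
    · simp only [Set.mem_singleton_iff] at hb0
      rw [hb0, add_zero] at hab
      exact hab ▸ haA
  · -- density
    have hsub : t ⊆ closure (D : Set X) := by
      intro x hx
      obtain ⟨n, rfl⟩ : ∃ n, v n = x := by
        obtain ⟨n, hn⟩ := hv0 ⟨x, hx⟩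
        exact ⟨n, congrArg Subtype.val hn⟩
      rw [Metric.mem_closure_iff]
      intro δ hδ
      obtain ⟨k, hk⟩ := exists_nat_one_div_lt hδ
      refine ⟨g (Sum.inr (n, k)), Submodule.subset_span ⟨Sum.inr (n, k), rfl⟩, ?_⟩
      rw [dist_comm]
      calc dist (g (Sum.inr (n, k))) (v n) < 1 / (k + 1) := hεd (n, k)
        _ < δ := hk
    have : Dense (closure (D : Set X)) := htd.mono hsub
    rwa [dense_closure] at this
  · -- rank
    have h1 : Module.rank ℝ D = #(Set.range g) := rank_span hgli
    rw [h1, Cardinal.mk_range_eq g hgli.injective]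
    have h2 : #(↥S ⊕ ℕ × ℕ) = #↥S + ℵ₀ := by simp
    have h3 : #(Set.range ⇑f) + #↥S = #ι := by
      rw [hS]; exact Cardinal.mk_sum_compl _
    have h4 : #(ℕ × ℕ) = ℵ₀ := by simp
    rw [h2, ← hcardι, ← h3, Cardinal.mk_range_eq ⇑f f.injective, h4]
    exact add_comm _ _
end

section
/- Let X be a metrizable separable topological vector space and Y a vector subspace of X. If X \ Y is lineable (i.e., Y has infinite algebraic codimension), then X \ Y ∪ {0} contains a dense vector subspace of X. In particular, for infinite-dimensional X, lineability and dense-lineability of X \ Y are equivalent. -/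
private noncomputable def natSeq (step : ℕ → (ℕ → ℕ) → ℕ) : ℕ → ℕ
  | n => step n (fun i => if h : i < n then natSeq step i else 0)
  termination_by n => n
  decreasing_by exact h

private lemma natSeq_eq (step : ℕ → (ℕ → ℕ) → ℕ) (n : ℕ) :
    natSeq step n = step n (fun i => if h : i < n then natSeq step i else 0) := by
  rw [natSeq]

private lemma li_aux {V : Type*} [AddCommGroup V] [Module ℝ V] (w : ℕ → V)
    (h : ∀ n, w n ∉ Submodule.span ℝ (w '' Set.Iio n)) : LinearIndependent ℝ w := by
  rw [linearIndependent_iff']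
  intro s
  induction s using Finset.strongInductionOn with
  | _ s ih =>
    intro g hg i hi
    have hne : s.Nonempty := ⟨i, hi⟩
    set n := s.max' hne with hn
    have hnmem : n ∈ s := s.max'_mem hne
    have hle : ∀ j ∈ s, j ≤ n := fun j hj => s.le_max' j hj
    have hgn : g n = 0 := by
      by_contra hgn
      refine h n ?_
      have hsum : g n • w n + ∑ j ∈ s.erase n, g j • w j = 0 := by
        rw [Finset.add_sum_erase s (fun j => g j • w j) hnmem]; exact hg
      have h2 : g n • w n = -∑ j ∈ s.erase n, g j • w j := eq_neg_of_add_eq_zero_left hsum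
      have h3 : w n = (g n)⁻¹ • (-∑ j ∈ s.erase n, g j • w j) := by
        rw [← h2, smul_smul, inv_mul_cancel₀ hgn, one_smul]
      rw [h3]
      refine Submodule.smul_mem _ _ (Submodule.neg_mem _ (Submodule.sum_mem _ ?_))
      intro j hj
      refine Submodule.smul_mem _ _ (Submodule.subset_span ⟨j, ?_, rfl⟩)
      exact Set.mem_Iio.mpr (lt_of_le_of_ne (hle j (Finset.mem_of_mem_erase hj))
        (Finset.ne_of_mem_erase hj))
    have hrest : ∑ j ∈ s.erase n, g j • w j = 0 := by
      rw [← Finset.add_sum_erase s (fun j => g j • w j) hnmem, hgn, zero_smul, zero_add] at hg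
      exact hg
    rcases eq_or_ne i n with rfl | hin
    · exact hgn
    · exact ih (s.erase n) (Finset.erase_ssubset hnmem) g hrest i
        (Finset.mem_erase.mpr ⟨hin, hi⟩)

open Cardinal

section
variable {X : Type} [AddCommGroup X] [Module ℝ X] [TopologicalSpace X]
    [IsTopologicalAddGroup X] [ContinuousSMul ℝ X]
    [TopologicalSpace.MetrizableSpace X] [TopologicalSpace.SeparableSpace X]

private lemma denseAux (Y : Submodule ℝ X) (hQ : ℵ₀ ≤ Module.rank ℝ (X ⧸ Y)) :
    ∃ D : Submodule ℝ X, (D : Set X) ⊆ (Y : Set X)ᶜ ∪ {0} ∧ Dense (D : Set X) := by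
  classical
  -- independent sequence in the quotient
  obtain ⟨s, hs_card, hs_li⟩ := le_rank_iff_exists_linearIndependent.mp hQ
  have hns : Nonempty (ℕ ≃ s) := Cardinal.eq.mp (by rw [Cardinal.mk_nat, hs_card])
  obtain ⟨e⟩ := hns
  set u : ℕ → X ⧸ Y := fun n => (e n : X ⧸ Y) with hu_def
  have hu : LinearIndependent ℝ u := hs_li.comp e e.injective
  -- preimages
  have hmex : ∀ j, ∃ x : X, Y.mkQ x = u j := fun j => Y.mkQ_surjective (u j)
  choose m hmspec using hmex
  -- metric and dense sequence
  letI : MetricSpace X := TopologicalSpace.metrizableSpaceMetric X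
  haveI : Nonempty X := ⟨0⟩
  set x0 : ℕ → X := TopologicalSpace.denseSeq X with hx0_def
  have hx0 : DenseRange x0 := TopologicalSpace.denseRange_denseSeq X
  set p : ℕ ≃ ℕ × ℕ := (Denumerable.eqv (ℕ × ℕ)).symm with hp_def
  set x' : ℕ → X := fun n => x0 (p n).1 with hx'_def
  set r : ℕ → ℝ := fun n => 1 / ((p n).2 + 1) with hr_def
  have hr : ∀ n, 0 < r n := fun n => by positivity
  -- choice of indices
  have hex : ∀ (n : ℕ) (g : ℕ → ℕ), ∃ j, u j ∉
      Submodule.span ℝ ((fun i => Y.mkQ (x' i)) '' Set.Iic n ∪ (fun i => u (g i)) '' Set.Iio n) := by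
    intro n g
    by_contra hcon
    push_neg at hcon
    set W := Submodule.span ℝ
      ((fun i => Y.mkQ (x' i)) '' Set.Iic n ∪ (fun i => u (g i)) '' Set.Iio n) with hW
    have hli : LinearIndependent ℝ (fun j : ℕ => (⟨u j, hcon j⟩ : W)) :=
      LinearIndependent.of_comp W.subtype hu
    have h1 : ℵ₀ ≤ Module.rank ℝ W := by
      simpa [Cardinal.mk_nat] using hli.cardinal_le_rank
    have hfin : ((fun i => Y.mkQ (x' i)) '' Set.Iic n ∪ (fun i => u (g i)) '' Set.Iio n).Finite :=
      ((Set.finite_Iic n).image _).union ((Set.finite_Iio n).image _)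
    have h2 : Module.rank ℝ W < ℵ₀ :=
      lt_of_le_of_lt (rank_span_le _) hfin.lt_aleph0
    exact absurd h1 (not_le.mpr h2)
  choose step hstep using hex
  set k : ℕ → ℕ := natSeq step with hk_def
  have hk : ∀ n, u (k n) ∉
      Submodule.span ℝ ((fun i => Y.mkQ (x' i)) '' Set.Iic n ∪ (fun i => u (k i)) '' Set.Iio n) := by
    intro n
    have h1 := hstep n (fun i => if h : i < n then natSeq step i else 0)
    have himg : (fun i => u (if h : i < n then natSeq step i else 0)) '' Set.Iio n
        = (fun i => u (k i)) '' Set.Iio n :=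
      Set.image_congr (fun i hi => by rw [dif_pos (Set.mem_Iio.mp hi)])
    rw [himg] at h1
    have hkn : k n = step n (fun i => if h : i < n then natSeq step i else 0) := natSeq_eq step n
    rw [hkn]
    exact h1
  -- small coefficients
  have hεe : ∀ n, ∃ ε : ℝ, ε ≠ 0 ∧ dist (x' n + ε • m (k n)) (x' n) < r n := by
    intro n
    have hcont : Continuous fun c : ℝ => x' n + c • m (k n) :=
      continuous_const.add (continuous_id.smul continuous_const)
    have htend : Filter.Tendsto (fun c : ℝ => x' n + c • m (k n)) (nhds 0) (nhds (x' n)) := by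
      have := hcont.tendsto 0
      simpa using this
    have hev := htend (Metric.ball_mem_nhds (x' n) (hr n))
    obtain ⟨δ, hδpos, hδ⟩ := Metric.mem_nhds_iff.mp hev
    refine ⟨δ / 2, by positivity, ?_⟩
    have hmem : (δ / 2 : ℝ) ∈ Metric.ball (0 : ℝ) δ := by
      rw [Metric.mem_ball, Real.dist_eq, sub_zero, abs_of_pos (by positivity : (0:ℝ) < δ / 2)]
      linarith
    have := hδ hmem
    simpa [Metric.mem_ball] using this
  choose ε hε0 hεd using hεe
  set y : ℕ → X := fun n => x' n + ε n • m (k n) with hy_def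
  set w : ℕ → X ⧸ Y := fun n => Y.mkQ (y n) with hw_def
  have hwn : ∀ n, w n = Y.mkQ (x' n) + ε n • u (k n) := by
    intro n
    simp [hw_def, hy_def, map_add, map_smul, hmspec]
  have hw_notmem : ∀ n, w n ∉ Submodule.span ℝ (w '' Set.Iio n) := by
    intro n hmem
    apply hk n
    set W := Submodule.span ℝ
      ((fun i => Y.mkQ (x' i)) '' Set.Iic n ∪ (fun i => u (k i)) '' Set.Iio n) with hW
    have hsub : Submodule.span ℝ (w '' Set.Iio n) ≤ W := by
      rw [Submodule.span_le]
      rintro _ ⟨i, hi, rfl⟩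
      rw [hwn i]
      refine W.add_mem (Submodule.subset_span (Or.inl ⟨i, Set.mem_Iic.mpr (le_of_lt (Set.mem_Iio.mp hi)), rfl⟩))
        (W.smul_mem _ (Submodule.subset_span (Or.inr ⟨i, hi, rfl⟩)))
    have h1 : w n ∈ W := hsub hmem
    have h2 : Y.mkQ (x' n) ∈ W := Submodule.subset_span (Or.inl ⟨n, Set.mem_Iic.mpr (le_refl n), rfl⟩)
    have h3 : ε n • u (k n) ∈ W := by
      have := W.sub_mem h1 h2
      rwa [hwn n, add_sub_cancel_left] at this
    exact (Submodule.smul_mem_iff _ (hε0 n)).mp h3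
  have hli : LinearIndependent ℝ (Y.mkQ ∘ y) := li_aux _ (fun n => hw_notmem n)
  have hdisj : Disjoint (Submodule.span ℝ (Set.range y)) (LinearMap.ker Y.mkQ) :=
    Submodule.range_ker_disjoint hli
  rw [Submodule.ker_mkQ] at hdisj
  refine ⟨Submodule.span ℝ (Set.range y), ?_, ?_⟩
  · intro v hv
    by_cases hvY : v ∈ Y
    · exact Or.inr (Submodule.disjoint_def.mp hdisj v hv hvY)
    · exact Or.inl hvY
  · rw [Metric.dense_iff]
    intro x ρ hρ
    obtain ⟨j, hj⟩ := exists_nat_one_div_lt (half_pos hρ)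
    obtain ⟨i, hi⟩ := Metric.denseRange_iff.mp hx0 x (ρ / 2) (half_pos hρ)
    set n := p.symm (i, j) with hn_def
    have hpn : p n = (i, j) := p.apply_symm_apply _
    have hx'n : x' n = x0 i := by simp [hx'_def, hpn]
    have hrn : r n = 1 / (j + 1) := by simp [hr_def, hpn]
    have hd1 : dist x (y n) < ρ := by
      have ht := dist_triangle x (x' n) (y n)
      have h2 : dist (x' n) (y n) < ρ / 2 := by
        rw [dist_comm]
        calc dist (y n) (x' n) < r n := hεd n
          _ = 1 / (j + 1) := hrn
          _ < ρ / 2 := by exact_mod_cast hj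
      have h1 : dist x (x' n) < ρ / 2 := by rw [hx'n]; exact hi
      linarith
    refine ⟨y n, ?_, Submodule.subset_span (Set.mem_range_self n)⟩
    rw [Metric.mem_ball, dist_comm]
    exact hd1
end


private lemma quotRank {X : Type} [AddCommGroup X] [Module ℝ X]
    (Y : Submodule ℝ X) (M : Submodule ℝ X)
    (hM : (M : Set X) ⊆ (Y : Set X)ᶜ ∪ {0}) (hMr : ℵ₀ ≤ Module.rank ℝ M) :
    ℵ₀ ≤ Module.rank ℝ (X ⧸ Y) := by
  have hinj : Function.Injective (Y.mkQ.comp M.subtype) := by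
    rw [← LinearMap.ker_eq_bot, LinearMap.ker_eq_bot']
    intro m hm
    have hmY : (m : X) ∈ Y := by
      simpa [Submodule.Quotient.mk_eq_zero] using hm
    rcases hM m.2 with h0 | h0
    · exact absurd hmY h0
    · exact Subtype.ext h0
  exact hMr.trans (LinearMap.rank_le_of_injective _ hinj)

theorem stmt3 {X : Type} [AddCommGroup X] [Module ℝ X] [TopologicalSpace X]
    [IsTopologicalAddGroup X] [ContinuousSMul ℝ X]
    [TopologicalSpace.MetrizableSpace X] [TopologicalSpace.SeparableSpace X]
    (Y : Submodule ℝ X) :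
    ((∃ M : Submodule ℝ X, (M : Set X) ⊆ (Y : Set X)ᶜ ∪ {0} ∧ ℵ₀ ≤ Module.rank ℝ M) →
      ∃ D : Submodule ℝ X, (D : Set X) ⊆ (Y : Set X)ᶜ ∪ {0} ∧ Dense (D : Set X)) ∧
    (ℵ₀ ≤ Module.rank ℝ X →
      ((∃ M : Submodule ℝ X, (M : Set X) ⊆ (Y : Set X)ᶜ ∪ {0} ∧ ℵ₀ ≤ Module.rank ℝ M) ↔
        ∃ D : Submodule ℝ X, (D : Set X) ⊆ (Y : Set X)ᶜ ∪ {0} ∧ Dense (D : Set X))) := by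
  have part1 : (∃ M : Submodule ℝ X, (M : Set X) ⊆ (Y : Set X)ᶜ ∪ {0} ∧ ℵ₀ ≤ Module.rank ℝ M) →
      ∃ D : Submodule ℝ X, (D : Set X) ⊆ (Y : Set X)ᶜ ∪ {0} ∧ Dense (D : Set X) := by
    rintro ⟨M, hM, hMr⟩
    exact denseAux Y (quotRank Y M hM hMr)
  refine ⟨part1, fun hX => ⟨part1, ?_⟩⟩
  rintro ⟨D, hD, hdense⟩
  refine ⟨D, hD, ?_⟩
  by_contra hlt
  haveI : FiniteDimensional ℝ D := Module.rank_lt_aleph0_iff.mp (not_le.mp hlt)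
  have hclosed : IsClosed (D : Set X) := Submodule.closed_of_finiteDimensional D
  have huniv : (D : Set X) = Set.univ := by
    rw [← hclosed.closure_eq]
    exact hdense.closure_eq
  have hD_top : D = ⊤ := by
    rw [Submodule.eq_top_iff']
    intro x
    have : x ∈ (D : Set X) := huniv ▸ Set.mem_univ x
    exact this
  apply hlt
  rw [hD_top, rank_top]
  exact hX
end

section
/- Assuming the Continuum Hypothesis, if X is a non-separable F-space and Y is a closed separable vector subspace of X, then X \ Y ∪ {0} contains a vector subspace Z with dim(Z) = dim(X). -/
open Cardinal TopologicalSpace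
open scoped BoundedContinuousFunction

theorem stmt5 {X : Type} [AddCommGroup X] [Module ℝ X] [UniformSpace X]
    [CompleteSpace X] [IsTopologicalAddGroup X] [ContinuousSMul ℝ X]
    [TopologicalSpace.MetrizableSpace X]
    (hCH : Cardinal.continuum = Cardinal.aleph 1)
    (hnonsep : ¬ TopologicalSpace.SeparableSpace X)
    (Y : Submodule ℝ X) (hclosed : IsClosed (Y : Set X))
    (hsep : TopologicalSpace.IsSeparable (Y : Set X)) :
    ∃ Z : Submodule ℝ X, (Z : Set X) ⊆ (Y : Set X)ᶜ ∪ {0} ∧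
      Module.rank ℝ Z = Module.rank ℝ X := by
  obtain ⟨Z, hZ⟩ := Submodule.exists_isCompl Y
  have hdisj : Y ⊓ Z = ⊥ := hZ.inf_eq_bot
  have hsup : Y ⊔ Z = ⊤ := hZ.sup_eq_top
  refine ⟨Z, ?_, ?_⟩
  · intro x hx
    by_cases hxY : x ∈ Y
    · have hmem : x ∈ Y ⊓ Z := ⟨hxY, hx⟩
      rw [hdisj, Submodule.mem_bot] at hmem
      exact Or.inr hmem
    · exact Or.inl hxY
  · have hsum : Module.rank ℝ X = Module.rank ℝ Y + Module.rank ℝ Z := by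
      have h := Submodule.rank_sup_add_rank_inf_eq Y Z
      rw [hsup, hdisj, rank_bot, add_zero, rank_top] at h
      exact h
    -- `Z` has uncountable rank, else `X` would be separable
    have hZale : ℵ₀ < Module.rank ℝ Z := by
      by_contra hle
      push_neg at hle
      have hZsep : IsSeparable (Z : Set X) := by
        set b := Module.Basis.ofVectorSpace ℝ Z with hb
        have hcount : (Module.Basis.ofVectorSpaceIndex ℝ Z).Countable := by
          rw [← Set.countable_coe_iff, ← Cardinal.mk_le_aleph0_iff]
          calc #(Module.Basis.ofVectorSpaceIndex ℝ Z) = Module.rank ℝ Z := b.mk_eq_rank''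
            _ ≤ ℵ₀ := hle
        have htop : Submodule.span ℝ (Module.Basis.ofVectorSpaceIndex ℝ Z) = ⊤ := by
          rw [← Module.Basis.range_ofVectorSpace ℝ Z]
          exact b.span_eq
        have hspan : Submodule.span ℝ (Z.subtype '' (Module.Basis.ofVectorSpaceIndex ℝ Z)) = Z := by
          rw [← Submodule.map_span, htop, Submodule.map_subtype_top]
        rw [← hspan]
        exact ((hcount.image _).isSeparable).span
      have : SeparableSpace X := by
        rw [← isSeparable_univ_iff]
        have huniv : (Set.univ : Set X)
            = (Submodule.span ℝ ((Y : Set X) ∪ (Z : Set X)) : Set X) := by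
          rw [Submodule.span_union, Submodule.span_eq, Submodule.span_eq, hsup,
            Submodule.top_coe]
        rw [huniv]
        exact (hsep.union hZsep).span
      exact hnonsep this
    -- `Y` has rank at most continuum
    have hYcard : Module.rank ℝ Y ≤ 𝔠 := by
      haveI := hsep.secondCountableTopology
      letI := metrizableSpaceMetric (Y : Set X)
      obtain ⟨f, hf⟩ := exists_embedding_l_infty ↥(Y : Set X)
      have h1 : #↥(Y : Set X) ≤ #(ℕ →ᵇ ℝ) := Cardinal.mk_le_of_injective hf.injective
      have h2 : #(ℕ →ᵇ ℝ) ≤ #(ℕ → ℝ) := Cardinal.mk_le_of_injective DFunLike.coe_injective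
      have h3 : #(ℕ → ℝ) = 𝔠 := by
        rw [← Cardinal.power_def, Cardinal.mk_real, Cardinal.mk_nat,
          Cardinal.continuum_power_aleph0]
      calc Module.rank ℝ Y ≤ #↥(Y : Set X) := rank_le_card ℝ Y
        _ ≤ #(ℕ →ᵇ ℝ) := h1
        _ ≤ #(ℕ → ℝ) := h2
        _ = 𝔠 := h3
    have hCH0 : (Cardinal.continuum : Cardinal.{0}) = Cardinal.aleph 1 := by
      refine Cardinal.lift_inj.mp ?_
      rw [Cardinal.lift_continuum, Cardinal.lift_aleph, Ordinal.lift_one]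
      exact hCH
    have hZ1 : ℵ₁ ≤ Module.rank ℝ Z := by
      rw [← Cardinal.succ_aleph0]
      exact Order.succ_le_of_lt hZale
    have hYZ : Module.rank ℝ Y ≤ Module.rank ℝ Z := by
      calc Module.rank ℝ Y ≤ 𝔠 := hYcard
        _ = ℵ₁ := hCH0
        _ ≤ Module.rank ℝ Z := hZ1
    refine le_antisymm (Submodule.rank_le Z) ?_
    rw [hsum]
    calc Module.rank ℝ Y + Module.rank ℝ Z
        ≤ Module.rank ℝ Z + Module.rank ℝ Z := add_le_add_left hYZ _
      _ = Module.rank ℝ Z := Cardinal.add_eq_self hZale.le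
end

section
/- On the space X = C₀([0,∞)) ∩ R([0,∞)) of continuous functions f : [0,∞) → ℝ with f(x) → 0 as x → ∞ that are improperly Riemann-integrable on [0,∞), the expression ‖f‖ := sup_{x≥0} |f(x)| + sup_{x≥0} |∫₀ˣ f(t) dt| defines a norm making X a separable Banach space, and the set of continuous functions with bounded support is a dense subspace of X. -/
open MeasureTheory Filter

/-- Continuous on `[0,∞)`, vanishing at `∞`, improperly Riemann-integrable on `[0,∞)`
(and, by convention, zero on `(-∞,0)`). -/
def Stmt15Good (f : ℝ → ℝ) : Prop :=
  (∀ x < (0:ℝ), f x = 0) ∧ ContinuousOn f (Set.Ici 0) ∧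
  Tendsto f atTop (nhds 0) ∧
  ∃ L, Tendsto (fun x => ∫ t in (0:ℝ)..x, f t) atTop (nhds L)

/-- `‖f‖ = sup_{x ≥ 0} |f x| + sup_{x ≥ 0} |∫₀ˣ f|`. -/
noncomputable def stmt15Norm (f : ℝ → ℝ) : ℝ :=
  (⨆ x : Set.Ici (0:ℝ), |f (x : ℝ)|) + ⨆ x : Set.Ici (0:ℝ), |∫ t in (0:ℝ)..(x : ℝ), f t|

namespace S15

noncomputable def FI (f : ℝ → ℝ) (x : ℝ) : ℝ := ∫ t in (0:ℝ)..x, f t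

lemma norm_eq (f : ℝ → ℝ) :
    stmt15Norm f = (⨆ x : Set.Ici (0:ℝ), |f (x : ℝ)|) + ⨆ x : Set.Ici (0:ℝ), |FI f x| := rfl

lemma intInt {f : ℝ → ℝ} (hf : ContinuousOn f (Set.Ici 0)) {a x : ℝ} (ha : 0 ≤ a) (hx : 0 ≤ x) :
    IntervalIntegrable f volume a x :=
  (hf.mono (fun t ht => by
    rcases le_total a x with h | h
    · rw [Set.uIcc_of_le h] at ht; exact le_trans ha ht.1
    · rw [Set.uIcc_of_ge h] at ht; exact le_trans hx ht.1)).intervalIntegrable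

lemma FI_sub {f g : ℝ → ℝ} (hf : ContinuousOn f (Set.Ici 0)) (hg : ContinuousOn g (Set.Ici 0))
    {x : ℝ} (hx : 0 ≤ x) : FI (f - g) x = FI f x - FI g x := by
  have h1 := intInt hf le_rfl hx
  have h2 := intInt hg le_rfl hx
  simp only [FI, Pi.sub_apply]
  exact intervalIntegral.integral_sub h1 h2

lemma FI_add {f g : ℝ → ℝ} (hf : ContinuousOn f (Set.Ici 0)) (hg : ContinuousOn g (Set.Ici 0))
    {x : ℝ} (hx : 0 ≤ x) : FI (f + g) x = FI f x + FI g x := by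
  have h1 := intInt hf le_rfl hx
  have h2 := intInt hg le_rfl hx
  simp only [FI, Pi.add_apply]
  exact intervalIntegral.integral_add h1 h2

/-- bound on sup part -/
lemma bdd_sup {f : ℝ → ℝ} (hf : Stmt15Good f) : ∃ C : ℝ, ∀ x : ℝ, 0 ≤ x → |f x| ≤ C := by
  obtain ⟨-, hc, ht, -⟩ := hf
  have h1 : ∀ᶠ x in atTop, |f x| ≤ 1 := by
    have := Metric.tendsto_nhds.1 ht 1 one_pos
    filter_upwards [this] with x hx
    rw [Real.dist_eq, sub_zero] at hx; exact hx.le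
  obtain ⟨a, ha⟩ := eventually_atTop.1 h1
  obtain ⟨C, hC⟩ := (isCompact_Icc (a := (0:ℝ)) (b := max a 0)).exists_bound_of_continuousOn
    (hc.mono (fun t ht => ht.1))
  refine ⟨max C 1, fun x hx => ?_⟩
  rcases le_total x (max a 0) with h | h
  · exact le_max_of_le_left (by simpa using hC x ⟨hx, h⟩)
  · exact le_max_of_le_right (ha x (le_trans (le_max_left _ _) h))

lemma bdd_int {f : ℝ → ℝ} (hf : Stmt15Good f) : ∃ C : ℝ, ∀ x : ℝ, 0 ≤ x → |FI f x| ≤ C := by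
  obtain ⟨C₁, hC₁⟩ := bdd_sup hf
  obtain ⟨L, hL⟩ := hf.2.2.2
  have h1 : ∀ᶠ x in atTop, |FI f x| ≤ |L| + 1 := by
    have := Metric.tendsto_nhds.1 hL 1 one_pos
    filter_upwards [this] with x hx
    rw [Real.dist_eq] at hx
    calc |FI f x| = |(FI f x - L) + L| := by ring_nf
    _ ≤ |FI f x - L| + |L| := abs_add_le _ _
    _ ≤ |L| + 1 := by have := hx.le; unfold FI; linarith [hx.le]
  obtain ⟨a, ha⟩ := eventually_atTop.1 h1
  set b := max a 0 with hb
  have hb0 : (0:ℝ) ≤ b := le_max_right _ _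
  refine ⟨max ((max C₁ 0) * b) (|L| + 1), fun x hx => ?_⟩
  rcases le_total x b with h | h
  · refine le_max_of_le_left ?_
    have : ‖∫ t in (0:ℝ)..x, f t‖ ≤ (max C₁ 0) * |x - 0| := by
      apply intervalIntegral.norm_integral_le_of_norm_le_const
      intro t ht
      rw [Set.uIoc_of_le hx] at ht
      exact le_max_of_le_left (hC₁ t ht.1.le)
    calc |FI f x| ≤ (max C₁ 0) * |x - 0| := this
    _ ≤ (max C₁ 0) * b := by
        rw [sub_zero, abs_of_nonneg hx]
        exact mul_le_mul_of_nonneg_left h (le_max_right _ _)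
  · exact le_max_of_le_right (ha x (le_trans (le_max_left a 0) h))

lemma bddAbove_sup {f : ℝ → ℝ} (hf : Stmt15Good f) :
    BddAbove (Set.range fun x : Set.Ici (0:ℝ) => |f (x : ℝ)|) := by
  obtain ⟨C, hC⟩ := bdd_sup hf
  exact ⟨C, by rintro y ⟨x, rfl⟩; exact hC x x.2⟩

lemma bddAbove_int {f : ℝ → ℝ} (hf : Stmt15Good f) :
    BddAbove (Set.range fun x : Set.Ici (0:ℝ) => |FI f (x : ℝ)|) := by
  obtain ⟨C, hC⟩ := bdd_int hf
  exact ⟨C, by rintro y ⟨x, rfl⟩; exact hC x x.2⟩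

lemma norm_nonneg' (f : ℝ → ℝ) : 0 ≤ stmt15Norm f :=
  add_nonneg (Real.iSup_nonneg fun _ => abs_nonneg _) (Real.iSup_nonneg fun _ => abs_nonneg _)

lemma le_norm_sup {f : ℝ → ℝ} (hf : Stmt15Good f) {x : ℝ} (hx : 0 ≤ x) :
    |f x| ≤ stmt15Norm f :=
  le_add_of_le_of_nonneg (le_ciSup (bddAbove_sup hf) (⟨x, hx⟩ : Set.Ici (0:ℝ)))
    (Real.iSup_nonneg fun _ => abs_nonneg _)

lemma le_norm_int {f : ℝ → ℝ} (hf : Stmt15Good f) {x : ℝ} (hx : 0 ≤ x) :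
    |FI f x| ≤ stmt15Norm f :=
  le_add_of_nonneg_of_le (Real.iSup_nonneg fun _ => abs_nonneg _)
    (le_ciSup (bddAbove_int hf) (⟨x, hx⟩ : Set.Ici (0:ℝ)))

lemma norm_le {f : ℝ → ℝ} {c₁ c₂ : ℝ} (h1 : ∀ x : ℝ, 0 ≤ x → |f x| ≤ c₁)
    (h2 : ∀ x : ℝ, 0 ≤ x → |FI f x| ≤ c₂) : stmt15Norm f ≤ c₁ + c₂ :=
  add_le_add (ciSup_le fun x => h1 x x.2) (ciSup_le fun x => h2 x x.2)



lemma good_zero : Stmt15Good 0 := by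
  refine ⟨fun x _ => rfl, continuousOn_const, tendsto_const_nhds, 0, ?_⟩
  simpa using (tendsto_const_nhds : Tendsto (fun _ : ℝ => (0:ℝ)) atTop (nhds 0))

lemma good_add {f g : ℝ → ℝ} (hf : Stmt15Good f) (hg : Stmt15Good g) : Stmt15Good (f + g) := by
  obtain ⟨hf0, hfc, hft, Lf, hLf⟩ := hf
  obtain ⟨hg0, hgc, hgt, Lg, hLg⟩ := hg
  refine ⟨fun x hx => by simp [hf0 x hx, hg0 x hx], hfc.add hgc, by have h := hft.add hgt; rw [add_zero] at h; exact h,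
    Lf + Lg, ?_⟩
  apply (hLf.add hLg).congr'
  filter_upwards [eventually_ge_atTop (0:ℝ)] with x hx
  exact (FI_add hfc hgc hx).symm

lemma good_smul (c : ℝ) {f : ℝ → ℝ} (hf : Stmt15Good f) : Stmt15Good (c • f) := by
  obtain ⟨hf0, hfc, hft, Lf, hLf⟩ := hf
  refine ⟨fun x hx => by simp [hf0 x hx], hfc.const_smul c, by have h := hft.const_mul c; rw [mul_zero] at h; exact h,
    c * Lf, ?_⟩
  have : ∀ x : ℝ, (∫ t in (0:ℝ)..x, (c • f) t) = c * ∫ t in (0:ℝ)..x, f t := by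
    intro x
    simp only [Pi.smul_apply, smul_eq_mul]
    rw [← intervalIntegral.integral_const_mul]
  simpa only [this] using hLf.const_mul c

lemma good_neg {f : ℝ → ℝ} (hf : Stmt15Good f) : Stmt15Good (-f) := by
  have := good_smul (-1) hf; simpa using this

lemma good_sub {f g : ℝ → ℝ} (hf : Stmt15Good f) (hg : Stmt15Good g) : Stmt15Good (f - g) := by
  have := good_add hf (good_neg hg); simpa [sub_eq_add_neg] using this

lemma norm_triangle {f g : ℝ → ℝ} (hf : Stmt15Good f) (hg : Stmt15Good g) :
    stmt15Norm (f + g) ≤ stmt15Norm f + stmt15Norm g := by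
  have h1 : (⨆ x : Set.Ici (0:ℝ), |(f + g) (x : ℝ)|)
      ≤ (⨆ x : Set.Ici (0:ℝ), |f (x : ℝ)|) + ⨆ x : Set.Ici (0:ℝ), |g (x : ℝ)| := by
    refine ciSup_le fun x => ?_
    calc |(f + g) (x:ℝ)| ≤ |f x| + |g x| := by rw [Pi.add_apply]; exact abs_add_le _ _
    _ ≤ _ := add_le_add (le_ciSup (bddAbove_sup hf) x) (le_ciSup (bddAbove_sup hg) x)
  have h2 : (⨆ x : Set.Ici (0:ℝ), |FI (f + g) (x : ℝ)|)
      ≤ (⨆ x : Set.Ici (0:ℝ), |FI f (x : ℝ)|) + ⨆ x : Set.Ici (0:ℝ), |FI g (x : ℝ)| := by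
    refine ciSup_le fun x => ?_
    rw [FI_add hf.2.1 hg.2.1 x.2]
    calc |FI f x + FI g x| ≤ |FI f x| + |FI g x| := abs_add_le _ _
    _ ≤ _ := add_le_add (le_ciSup (bddAbove_int hf) x) (le_ciSup (bddAbove_int hg) x)
  calc stmt15Norm (f + g)
      = (⨆ x : Set.Ici (0:ℝ), |(f + g) (x : ℝ)|) + ⨆ x : Set.Ici (0:ℝ), |FI (f + g) (x : ℝ)| :=
        norm_eq _
  _ ≤ ((⨆ x : Set.Ici (0:ℝ), |f (x : ℝ)|) + ⨆ x : Set.Ici (0:ℝ), |g (x : ℝ)|)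
      + ((⨆ x : Set.Ici (0:ℝ), |FI f (x : ℝ)|) + ⨆ x : Set.Ici (0:ℝ), |FI g (x : ℝ)|) :=
        add_le_add h1 h2
  _ = stmt15Norm f + stmt15Norm g := by rw [norm_eq, norm_eq]; ring

lemma norm_smul (c : ℝ) (f : ℝ → ℝ) : stmt15Norm (c • f) = |c| * stmt15Norm f := by
  have e1 : ∀ x : ℝ, |(c • f) x| = |c| * |f x| := fun x => by
    simp [Pi.smul_apply, abs_mul]
  have e2 : ∀ x : ℝ, |FI (c • f) x| = |c| * |FI f x| := fun x => by
    have : FI (c • f) x = c * FI f x := by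
      simp only [FI, Pi.smul_apply, smul_eq_mul]
      rw [← intervalIntegral.integral_const_mul]
    rw [this, abs_mul]
  rw [stmt15Norm, stmt15Norm]
  simp only [e1]
  have := Real.mul_iSup_of_nonneg (abs_nonneg c) (fun x : Set.Ici (0:ℝ) => |f (x:ℝ)|)
  rw [← this]
  have h2 : (⨆ x : Set.Ici (0:ℝ), |∫ t in (0:ℝ)..(x:ℝ), (c • f) t|)
      = |c| * ⨆ x : Set.Ici (0:ℝ), |∫ t in (0:ℝ)..(x:ℝ), f t| := by
    have : (fun x : Set.Ici (0:ℝ) => |∫ t in (0:ℝ)..(x:ℝ), (c • f) t|)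
        = fun x : Set.Ici (0:ℝ) => |c| * |∫ t in (0:ℝ)..(x:ℝ), f t| := by
      funext x; exact e2 x
    rw [this, ← Real.mul_iSup_of_nonneg (abs_nonneg c)]
  rw [h2]; ring

lemma norm_zero_iff {f : ℝ → ℝ} (hf : Stmt15Good f) : stmt15Norm f = 0 ↔ f = 0 := by
  constructor
  · intro h
    funext x
    rcases lt_or_ge x 0 with hx | hx
    · exact hf.1 x hx
    · have := le_norm_sup hf hx
      rw [h] at this
      have := abs_nonneg (f x)
      simp only [Pi.zero_apply]
      have : |f x| = 0 := le_antisymm (by linarith [le_norm_sup hf hx, h ▸ le_norm_sup hf hx]) (abs_nonneg _)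
      exact abs_eq_zero.1 this
  · rintro rfl
    rw [stmt15Norm]
    simp



lemma complete (u : ℕ → ℝ → ℝ) (hu : ∀ n, Stmt15Good (u n))
    (hC : ∀ ε : ℝ, 0 < ε → ∃ N₀ : ℕ, ∀ m ≥ N₀, ∀ n ≥ N₀, stmt15Norm (u m - u n) < ε) :
    ∃ f, Stmt15Good f ∧ Tendsto (fun n => stmt15Norm (u n - f)) atTop (nhds 0) := by
  have hsub : ∀ m n, Stmt15Good (u m - u n) := fun m n => good_sub (hu m) (hu n)
  have hpt : ∀ m n (x : ℝ), 0 ≤ x → |u m x - u n x| ≤ stmt15Norm (u m - u n) := by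
    intro m n x hx
    have := le_norm_sup (hsub m n) hx
    simpa [Pi.sub_apply] using this
  have hptI : ∀ m n (x : ℝ), 0 ≤ x → |FI (u m) x - FI (u n) x| ≤ stmt15Norm (u m - u n) := by
    intro m n x hx
    have := le_norm_int (hsub m n) hx
    rwa [FI_sub (hu m).2.1 (hu n).2.1 hx] at this
  have hcs : ∀ x : ℝ, ∃ l, Tendsto (fun n => u n x) atTop (nhds l) := by
    intro x
    rcases lt_or_ge x 0 with hx | hx
    · refine ⟨0, ?_⟩
      have : (fun n => u n x) = fun _ => 0 := funext fun n => (hu n).1 x hx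
      rw [this]; exact tendsto_const_nhds
    · apply cauchySeq_tendsto_of_complete
      rw [Metric.cauchySeq_iff]
      intro ε hε
      obtain ⟨N, hN⟩ := hC ε hε
      exact ⟨N, fun m hm n hn =>
        lt_of_le_of_lt (by rw [Real.dist_eq]; exact hpt m n x hx) (hN m hm n hn)⟩
  choose f hf using hcs
  have hfneg : ∀ x < (0:ℝ), f x = 0 := by
    intro x hx
    have h0 : Tendsto (fun n => u n x) atTop (nhds 0) := by
      have : (fun n => u n x) = fun _ => 0 := funext fun n => (hu n).1 x hx
      rw [this]; exact tendsto_const_nhds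
    exact tendsto_nhds_unique (hf x) h0
  have hunif : ∀ ε : ℝ, 0 < ε → ∃ N, ∀ n ≥ N, ∀ x : ℝ, 0 ≤ x → |u n x - f x| ≤ ε := by
    intro ε hε
    obtain ⟨N, hN⟩ := hC ε hε
    refine ⟨N, fun n hn x hx => ?_⟩
    have hlim : Tendsto (fun m => |u n x - u m x|) atTop (nhds |u n x - f x|) :=
      (tendsto_const_nhds.sub (hf x)).abs
    refine le_of_tendsto hlim ?_
    filter_upwards [eventually_ge_atTop N] with m hm
    exact (hpt n m x hx).trans (hN n hn m hm).le
  have hTU : TendstoUniformlyOn (fun n x => u n x) f atTop (Set.Ici 0) := by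
    rw [Metric.tendstoUniformlyOn_iff]
    intro ε hε
    obtain ⟨N, hN⟩ := hunif (ε/2) (by linarith)
    filter_upwards [eventually_ge_atTop N] with n hn x hx
    rw [Real.dist_eq]
    have := hN n hn x hx
    rw [abs_sub_comm] at this
    linarith
  have hfc : ContinuousOn f (Set.Ici 0) :=
    hTU.continuousOn (Eventually.of_forall fun n => (hu n).2.1).frequently
  have hft : Tendsto f atTop (nhds 0) := by
    rw [Metric.tendsto_nhds]
    intro ε hε
    obtain ⟨N, hN⟩ := hunif (ε/2) (by linarith)
    have h2 : ∀ᶠ x : ℝ in atTop, |u N x| < ε/2 := by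
      have := Metric.tendsto_nhds.1 (hu N).2.2.1 (ε/2) (by linarith)
      filter_upwards [this] with x hx; rwa [Real.dist_eq, sub_zero] at hx
    filter_upwards [h2, eventually_ge_atTop (0:ℝ)] with x h2x hx0
    rw [Real.dist_eq, sub_zero]
    have h1 := hN N le_rfl x hx0
    rw [abs_sub_comm] at h1
    calc |f x| = |(f x - u N x) + u N x| := by congr 1; ring
    _ ≤ |f x - u N x| + |u N x| := abs_add_le _ _
    _ < ε := by linarith
  have hFIpt : ∀ x : ℝ, 0 ≤ x → Tendsto (fun n => FI (u n) x) atTop (nhds (FI f x)) := by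
    intro x hx
    rw [Metric.tendsto_atTop]
    intro ε hε
    have hε' : 0 < ε / (x + 1) := div_pos hε (by linarith)
    obtain ⟨N, hN⟩ := hunif (ε / (x+1)) hε'
    refine ⟨N, fun n hn => ?_⟩
    rw [Real.dist_eq]
    have hint : FI (u n) x - FI f x = ∫ t in (0:ℝ)..x, (u n t - f t) := by
      simp only [FI]
      rw [intervalIntegral.integral_sub (intInt (hu n).2.1 le_rfl hx) (intInt hfc le_rfl hx)]
    rw [hint]
    have hb : ‖∫ t in (0:ℝ)..x, (u n t - f t)‖ ≤ (ε/(x+1)) * |x - 0| := by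
      apply intervalIntegral.norm_integral_le_of_norm_le_const
      intro t ht
      rw [Set.uIoc_of_le hx] at ht
      exact hN n hn t ht.1.le
    rw [sub_zero, abs_of_nonneg hx] at hb
    calc |∫ t in (0:ℝ)..x, (u n t - f t)| ≤ ε/(x+1) * x := hb
    _ < ε/(x+1) * (x+1) := mul_lt_mul_of_pos_left (by linarith) hε'
    _ = ε := div_mul_cancel₀ ε (by linarith)
  set L : ℕ → ℝ := fun n => (hu n).2.2.2.choose with hLdef
  have hL : ∀ n, Tendsto (FI (u n)) atTop (nhds (L n)) := fun n => (hu n).2.2.2.choose_spec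
  have hLcauchy : CauchySeq L := by
    rw [Metric.cauchySeq_iff]
    intro ε hε
    obtain ⟨N, hN⟩ := hC ε hε
    refine ⟨N, fun m hm n hn => ?_⟩
    rw [Real.dist_eq]
    refine lt_of_le_of_lt (le_of_tendsto (((hL m).sub (hL n)).abs) ?_) (hN m hm n hn)
    filter_upwards [eventually_ge_atTop (0:ℝ)] with x hx
    exact hptI m n x hx
  obtain ⟨l, hl⟩ := cauchySeq_tendsto_of_complete hLcauchy
  have hFIl : Tendsto (FI f) atTop (nhds l) := by
    rw [Metric.tendsto_nhds]
    intro ε hε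
    have hε3 : 0 < ε/3 := by linarith
    obtain ⟨N, hN⟩ := hC (ε/3) hε3
    have h1 : ∀ x : ℝ, 0 ≤ x → |FI f x - FI (u N) x| ≤ ε/3 := by
      intro x hx
      have hlim : Tendsto (fun m => |FI (u m) x - FI (u N) x|) atTop
          (nhds |FI f x - FI (u N) x|) := ((hFIpt x hx).sub tendsto_const_nhds).abs
      refine le_of_tendsto hlim ?_
      filter_upwards [eventually_ge_atTop N] with m hm
      exact (hptI m N x hx).trans (hN m hm N le_rfl).le
    have h3 : |L N - l| ≤ ε/3 := by
      have hlim : Tendsto (fun m => |L N - L m|) atTop (nhds |L N - l|) :=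
        (tendsto_const_nhds.sub hl).abs
      refine le_of_tendsto hlim ?_
      filter_upwards [eventually_ge_atTop N] with m hm
      have h4 : |L N - L m| ≤ stmt15Norm (u N - u m) := by
        refine le_of_tendsto (((hL N).sub (hL m)).abs) ?_
        filter_upwards [eventually_ge_atTop (0:ℝ)] with x hx
        exact hptI N m x hx
      exact h4.trans (hN N le_rfl m hm).le
    have h2 : ∀ᶠ x : ℝ in atTop, |FI (u N) x - L N| < ε/3 := by
      have := Metric.tendsto_nhds.1 (hL N) (ε/3) hε3
      filter_upwards [this] with x hx; rwa [Real.dist_eq] at hx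
    filter_upwards [h2, eventually_ge_atTop (0:ℝ)] with x h2x hx0
    rw [Real.dist_eq]
    have h1x := h1 x hx0
    calc |FI f x - l| = |(FI f x - FI (u N) x) + ((FI (u N) x - L N) + (L N - l))| := by
          congr 1; ring
    _ ≤ |FI f x - FI (u N) x| + |(FI (u N) x - L N) + (L N - l)| := abs_add_le _ _
    _ ≤ |FI f x - FI (u N) x| + (|FI (u N) x - L N| + |L N - l|) :=
          add_le_add_right (abs_add_le _ _) _
    _ < ε := by linarith
  have hgoodf : Stmt15Good f := ⟨hfneg, hfc, hft, l, hFIl⟩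
  refine ⟨f, hgoodf, ?_⟩
  rw [Metric.tendsto_atTop]
  intro ε hε
  have hε4 : 0 < ε/4 := by linarith
  obtain ⟨N, hN⟩ := hC (ε/4) hε4
  refine ⟨N, fun n hn => ?_⟩
  have hs : ∀ x : ℝ, 0 ≤ x → |(u n - f) x| ≤ ε/4 := by
    intro x hx
    rw [Pi.sub_apply]
    have hlim : Tendsto (fun m => |u n x - u m x|) atTop (nhds |u n x - f x|) :=
      (tendsto_const_nhds.sub (hf x)).abs
    refine le_of_tendsto hlim ?_
    filter_upwards [eventually_ge_atTop N] with m hm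
    exact (hpt n m x hx).trans (hN n hn m hm).le
  have hi : ∀ x : ℝ, 0 ≤ x → |FI (u n - f) x| ≤ ε/4 := by
    intro x hx
    rw [FI_sub (hu n).2.1 hfc hx]
    have hlim : Tendsto (fun m => |FI (u n) x - FI (u m) x|) atTop
        (nhds |FI (u n) x - FI f x|) := (tendsto_const_nhds.sub (hFIpt x hx)).abs
    refine le_of_tendsto hlim ?_
    filter_upwards [eventually_ge_atTop N] with m hm
    exact (hptI n m x hx).trans (hN n hn m hm).le
  rw [Real.dist_eq, sub_zero, abs_of_nonneg (norm_nonneg' _)]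
  calc stmt15Norm (u n - f) ≤ ε/4 + ε/4 := norm_le hs hi
  _ < ε := by linarith



lemma good_of_bddSupport {g : ℝ → ℝ} (hneg : ∀ x < (0:ℝ), g x = 0)
    (hcont : ContinuousOn g (Set.Ici 0)) {b : ℝ} (hb : 0 ≤ b) (hz : ∀ x, b ≤ x → g x = 0) :
    Stmt15Good g := by
  refine ⟨hneg, hcont, ?_, FI g b, ?_⟩
  · apply tendsto_const_nhds.congr'
    filter_upwards [eventually_ge_atTop b] with x hx
    exact (hz x hx).symm
  · apply tendsto_const_nhds.congr'
    filter_upwards [eventually_ge_atTop b] with x hx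
    show FI g b = ∫ t in (0:ℝ)..x, g t
    have hzero : (∫ t in b..x, g t) = 0 := by
      have : Set.EqOn g (fun _ => 0) (Set.uIcc b x) := by
        intro t ht
        rw [Set.uIcc_of_le hx] at ht
        exact hz t ht.1
      rw [intervalIntegral.integral_congr this]
      simp
    have hsplit := intervalIntegral.integral_add_adjacent_intervals
      (intInt hcont le_rfl hb) (intInt hcont hb (hb.trans hx)) (f := g) (μ := volume)
    show FI g b = ∫ t in (0:ℝ)..x, g t
    rw [← hsplit, hzero, add_zero]
    rfl

lemma approx_support {f : ℝ → ℝ} (hf : Stmt15Good f) {ε : ℝ} (hε : 0 < ε) :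
    ∃ b : ℝ, 0 ≤ b ∧ ∃ g : ℝ → ℝ, Stmt15Good g ∧ (∀ x, b ≤ x → g x = 0) ∧
      stmt15Norm (f - g) < ε := by
  obtain ⟨hneg, hcont, htend, L, hL⟩ := hf
  set δ := ε/5 with hδ
  have hδ0 : 0 < δ := by rw [hδ]; linarith
  have h1 : ∀ᶠ x : ℝ in atTop, |f x| ≤ δ := by
    have := Metric.tendsto_nhds.1 htend δ hδ0
    filter_upwards [this] with x hx; rw [Real.dist_eq, sub_zero] at hx; exact hx.le
  have h2 : ∀ᶠ x : ℝ in atTop, |FI f x - L| ≤ δ := by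
    have := Metric.tendsto_nhds.1 hL δ hδ0
    filter_upwards [this] with x hx; rw [Real.dist_eq] at hx; exact hx.le
  obtain ⟨a, ha⟩ := eventually_atTop.1 (h1.and (h2.and (eventually_ge_atTop (0:ℝ))))
  have ha0 : (0:ℝ) ≤ a := (ha a le_rfl).2.2
  have hfa : ∀ x, a ≤ x → |f x| ≤ δ := fun x hx => (ha x hx).1
  have hFa : ∀ x, a ≤ x → |FI f x - L| ≤ δ := fun x hx => (ha x hx).2.1
  set c : ℝ → ℝ := fun x => max 0 (min 1 (a + 1 - x)) with hcdef
  have hc01 : ∀ x, 0 ≤ c x ∧ c x ≤ 1 :=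
    fun x => ⟨le_max_left _ _, max_le zero_le_one (min_le_left _ _)⟩
  have hc1 : ∀ x, x ≤ a → c x = 1 := by
    intro x hx
    show max 0 (min 1 (a + 1 - x)) = 1
    rw [min_eq_left (by linarith), max_eq_right zero_le_one]
  have hcz : ∀ x, a + 1 ≤ x → c x = 0 := by
    intro x hx
    show max 0 (min 1 (a + 1 - x)) = 0
    rw [min_eq_right (by linarith), max_eq_left (by linarith)]
  have hccont : Continuous c :=
    continuous_const.max (continuous_const.min (continuous_const.sub continuous_id))
  set g : ℝ → ℝ := fun x => f x * c x with hgdef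
  have hgneg : ∀ x < (0:ℝ), g x = 0 := fun x hx => by
    show f x * c x = 0; rw [hneg x hx, zero_mul]
  have hgcont : ContinuousOn g (Set.Ici 0) := hcont.mul hccont.continuousOn
  have hgz : ∀ x, a + 1 ≤ x → g x = 0 := fun x hx => by
    show f x * c x = 0; rw [hcz x hx, mul_zero]
  have hgood : Stmt15Good g := good_of_bddSupport hgneg hgcont (by linarith) hgz
  refine ⟨a + 1, by linarith, g, hgood, hgz, ?_⟩
  have hfg : ∀ x, (f - g) x = f x * (1 - c x) := fun x => by
    show f x - f x * c x = f x * (1 - c x); ring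
  have hsup : ∀ x : ℝ, 0 ≤ x → |(f - g) x| ≤ δ := by
    intro x _
    rcases le_total x a with h | h
    · rw [hfg, hc1 x h]; simpa using hδ0.le
    · rw [hfg, abs_mul]
      have h1' : |1 - c x| ≤ 1 := by
        rcases hc01 x with ⟨h2', h3'⟩
        rw [abs_of_nonneg (by linarith)]; linarith
      calc |f x| * |1 - c x| ≤ δ * 1 :=
        mul_le_mul (hfa x h) h1' (abs_nonneg _) hδ0.le
      _ = δ := mul_one δ
  -- on [0, min x a] the functions agree
  have hagree : ∀ y : ℝ, 0 ≤ y → y ≤ a → FI f y = FI g y := by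
    intro y hy hya
    apply intervalIntegral.integral_congr
    intro t ht
    rw [Set.uIcc_of_le hy] at ht
    show f t = f t * c t
    rw [hc1 t (ht.2.trans hya), mul_one]
  have hint : ∀ x : ℝ, 0 ≤ x → |FI (f - g) x| ≤ 3 * δ := by
    intro x hx
    rw [FI_sub hcont hgcont hx]
    rcases le_total x a with h | h
    · rw [hagree x hx h, sub_self, abs_zero]; linarith
    · -- x ≥ a
      have hsplitf := intervalIntegral.integral_add_adjacent_intervals
        (intInt hcont le_rfl ha0) (intInt hcont ha0 hx) (f := f) (μ := volume)
      have hsplitg := intervalIntegral.integral_add_adjacent_intervals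
        (intInt hgcont le_rfl ha0) (intInt hgcont ha0 hx) (f := g) (μ := volume)
      have key : FI f x - FI g x = (∫ t in a..x, f t) - ∫ t in a..x, g t := by
        show (∫ t in (0:ℝ)..x, f t) - (∫ t in (0:ℝ)..x, g t) = _
        rw [← hsplitf, ← hsplitg]
        have := hagree a ha0 le_rfl
        show (FI f a + _) - (FI g a + _) = _
        rw [this]; ring
      rw [key]
      have hbf : |∫ t in a..x, f t| ≤ 2 * δ := by
        have : (∫ t in a..x, f t) = FI f x - FI f a := by
          show _ = (∫ t in (0:ℝ)..x, f t) - (∫ t in (0:ℝ)..a, f t)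
          rw [← hsplitf]; ring
        rw [this]
        calc |FI f x - FI f a| = |(FI f x - L) + (L - FI f a)| := by congr 1; ring
        _ ≤ |FI f x - L| + |L - FI f a| := abs_add_le _ _
        _ ≤ δ + δ := add_le_add (hFa x h) (by rw [abs_sub_comm]; exact hFa a le_rfl)
        _ = 2 * δ := by ring
      have hbg : |∫ t in a..x, g t| ≤ δ := by
        have hgb : ∀ t, a ≤ t → |g t| ≤ δ := by
          intro t ht
          show |f t * c t| ≤ δ
          rw [abs_mul]
          rcases hc01 t with ⟨h2', h3'⟩
          calc |f t| * |c t| ≤ δ * 1 :=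
            mul_le_mul (hfa t ht) (by rw [abs_of_nonneg h2']; exact h3') (abs_nonneg _) hδ0.le
          _ = δ := mul_one δ
        rcases le_total x (a + 1) with hx1 | hx1
        · have : ‖∫ t in a..x, g t‖ ≤ δ * |x - a| := by
            apply intervalIntegral.norm_integral_le_of_norm_le_const
            intro t ht
            rw [Set.uIoc_of_le h] at ht
            exact hgb t ht.1.le
          calc |∫ t in a..x, g t| ≤ δ * |x - a| := this
          _ ≤ δ * 1 := mul_le_mul_of_nonneg_left
              (by rw [abs_of_nonneg (by linarith)]; linarith) hδ0.le
          _ = δ := mul_one δ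
        · have hsplit2 := intervalIntegral.integral_add_adjacent_intervals
            (intInt hgcont ha0 (by linarith : (0:ℝ) ≤ a + 1))
            (intInt hgcont (by linarith : (0:ℝ) ≤ a + 1) hx) (f := g) (μ := volume)
          have hz2 : (∫ t in (a+1)..x, g t) = 0 := by
            have : Set.EqOn g (fun _ => 0) (Set.uIcc (a+1) x) := by
              intro t ht
              rw [Set.uIcc_of_le hx1] at ht
              exact hgz t ht.1
            rw [intervalIntegral.integral_congr this]; simp
          rw [← hsplit2, hz2, add_zero]
          have : ‖∫ t in a..(a+1), g t‖ ≤ δ * |(a+1) - a| := by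
            apply intervalIntegral.norm_integral_le_of_norm_le_const
            intro t ht
            rw [Set.uIoc_of_le (by linarith : a ≤ a + 1)] at ht
            exact hgb t ht.1.le
          calc |∫ t in a..(a+1), g t| ≤ δ * |(a+1) - a| := this
          _ = δ := by rw [show (a+1) - a = 1 by ring, abs_one, mul_one]
      calc |(∫ t in a..x, f t) - ∫ t in a..x, g t|
          ≤ |∫ t in a..x, f t| + |∫ t in a..x, g t| := abs_sub _ _
      _ ≤ 2 * δ + δ := add_le_add hbf hbg
      _ = 3 * δ := by ring
  calc stmt15Norm (f - g) ≤ δ + 3 * δ := norm_le hsup hint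
  _ < ε := by rw [hδ]; linarith



noncomputable def cutN (n : ℕ) : ℝ → ℝ :=
  fun x => if x < 0 then 0 else max 0 (min 1 ((n : ℝ) + 1 - x))

lemma cutN_nonneg (n : ℕ) (x : ℝ) : 0 ≤ cutN n x := by
  unfold cutN; split
  · exact le_rfl
  · exact le_max_left _ _

lemma cutN_le_one (n : ℕ) (x : ℝ) : cutN n x ≤ 1 := by
  unfold cutN; split
  · exact zero_le_one
  · exact max_le zero_le_one (min_le_left _ _)

lemma cutN_one {n : ℕ} {x : ℝ} (hx : 0 ≤ x) (hxn : x ≤ n) : cutN n x = 1 := by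
  unfold cutN
  rw [if_neg (not_lt.2 hx), min_eq_left (by linarith), max_eq_right zero_le_one]

lemma cutN_zero {n : ℕ} {x : ℝ} (hx : (n : ℝ) + 1 ≤ x) : cutN n x = 0 := by
  unfold cutN; split
  · rfl
  · rw [min_eq_right (by linarith), max_eq_left (by linarith)]

lemma cutN_contOn (n : ℕ) : ContinuousOn (cutN n) (Set.Ici 0) := by
  have hc : Continuous fun x : ℝ => max 0 (min 1 ((n : ℝ) + 1 - x)) :=
    continuous_const.max (continuous_const.min (continuous_const.sub continuous_id))
  refine hc.continuousOn.congr ?_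
  intro x hx
  unfold cutN
  rw [if_neg (not_lt.2 hx)]

noncomputable def pcut (q : Polynomial ℚ) (n : ℕ) : ℝ → ℝ :=
  fun x => (Polynomial.aeval x q) * cutN n x

lemma pcut_good (q : Polynomial ℚ) (n : ℕ) : Stmt15Good (pcut q n) := by
  refine good_of_bddSupport (fun x hx => ?_) ?_ (b := (n:ℝ) + 1) (by positivity) (fun x hx => ?_)
  · unfold pcut cutN; rw [if_pos hx, mul_zero]
  · exact (q.continuous_aeval.continuousOn).mul (cutN_contOn n)
  · unfold pcut; rw [cutN_zero hx, mul_zero]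

noncomputable def Dset : Set (ℝ → ℝ) := Set.range (fun q : Polynomial ℚ × ℕ => pcut q.1 q.2)

lemma Dset_countable : Dset.Countable := by
  have : Countable (Polynomial ℚ) :=
    Countable.of_equiv (ℕ →₀ ℚ) ((Polynomial.toFinsuppIso ℚ).toEquiv.trans AddMonoidAlgebra.coeffEquiv).symm
  exact Set.countable_range _

lemma Dset_good : ∀ h ∈ Dset, Stmt15Good h := by
  rintro h ⟨⟨q, n⟩, rfl⟩
  exact pcut_good q n

lemma rat_poly_approx (p : Polynomial ℝ) {B δ : ℝ} (hB : 0 ≤ B) (hδ : 0 < δ) :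
    ∃ q : Polynomial ℚ, ∀ x ∈ Set.Icc (0:ℝ) B, |Polynomial.aeval x q - p.eval x| ≤ δ := by
  set N := p.natDegree + 1 with hN
  set M := max B 1 with hM
  have hM1 : (1:ℝ) ≤ M := le_max_right _ _
  have hMpow : (0:ℝ) < (N:ℝ) * M ^ N := by positivity
  set η := δ / ((N:ℝ) * M ^ N) with hηdef
  have hη : 0 < η := div_pos hδ hMpow
  choose r hr using fun i : ℕ => exists_rat_near (p.coeff i) hη
  refine ⟨∑ i ∈ Finset.range N, Polynomial.C (r i) * Polynomial.X ^ i, fun x hx => ?_⟩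
  have hxM : |x| ≤ M := by rw [abs_of_nonneg hx.1]; exact hx.2.trans (le_max_left _ _)
  have heval : Polynomial.aeval x (∑ i ∈ Finset.range N, Polynomial.C (r i) * Polynomial.X ^ i)
      = ∑ i ∈ Finset.range N, (r i : ℝ) * x ^ i := by
    rw [map_sum]
    apply Finset.sum_congr rfl
    intro i _
    rw [map_mul, map_pow, Polynomial.aeval_C, Polynomial.aeval_X]
    norm_num
  have hevalp : p.eval x = ∑ i ∈ Finset.range N, p.coeff i * x ^ i := by
    rw [hN]; exact p.eval_eq_sum_range x
  rw [heval, hevalp, ← Finset.sum_sub_distrib]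
  calc |∑ i ∈ Finset.range N, ((r i : ℝ) * x ^ i - p.coeff i * x ^ i)|
      ≤ ∑ i ∈ Finset.range N, |(r i : ℝ) * x ^ i - p.coeff i * x ^ i| :=
        Finset.abs_sum_le_sum_abs _ _
  _ ≤ ∑ _i ∈ Finset.range N, η * M ^ N := by
      apply Finset.sum_le_sum
      intro i hi
      rw [show (r i : ℝ) * x ^ i - p.coeff i * x ^ i = ((r i : ℝ) - p.coeff i) * x ^ i by ring,
        abs_mul]
      have h1 : |(r i : ℝ) - p.coeff i| ≤ η := by rw [abs_sub_comm]; exact (hr i).le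
      have h2 : |x ^ i| ≤ M ^ N := by
        rw [abs_pow]
        calc |x| ^ i ≤ M ^ i := pow_le_pow_left₀ (abs_nonneg x) hxM i
        _ ≤ M ^ N := pow_le_pow_right₀ hM1 (Finset.mem_range.1 hi).le
      exact mul_le_mul h1 h2 (abs_nonneg _) hη.le
  _ = (N : ℝ) * (η * M ^ N) := by rw [Finset.sum_const, Finset.card_range, nsmul_eq_mul]
  _ = δ := by rw [hηdef, show (N:ℝ) * (δ / (↑N * M ^ N) * M ^ N) = δ / (↑N * M ^ N) * (↑N * M ^ N) by ring]; exact div_mul_cancel₀ δ hMpow.ne'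

lemma dense_in_good : ∀ f, Stmt15Good f → ∀ ε : ℝ, 0 < ε →
    ∃ g ∈ Dset, stmt15Norm (f - g) < ε := by
  intro f hf ε hε
  obtain ⟨b, hb0, g, hg, hgz, hfg⟩ := approx_support hf (ε := ε/2) (by linarith)
  obtain ⟨n, hn⟩ := exists_nat_ge b
  set B := (n : ℝ) + 1 with hB
  have hB0 : (0:ℝ) ≤ B := by positivity
  set δ := ε / (4 * ((n : ℝ) + 2)) with hδdef
  have hδ : 0 < δ := by
    rw [hδdef]; positivity
  obtain ⟨p, hp⟩ := exists_polynomial_near_of_continuousOn 0 B g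
    (hg.2.1.mono (fun t ht => ht.1)) (δ/2) (by linarith)
  obtain ⟨q, hq⟩ := rat_poly_approx p hB0 (half_pos hδ)
  set e := pcut q n with hedef
  have he : e ∈ Dset := ⟨(q, n), rfl⟩
  have hqg : ∀ x ∈ Set.Icc (0:ℝ) B, |Polynomial.aeval x q - g x| ≤ δ := by
    intro x hx
    calc |Polynomial.aeval x q - g x|
        = |(Polynomial.aeval x q - p.eval x) + (p.eval x - g x)| := by congr 1; ring
    _ ≤ |Polynomial.aeval x q - p.eval x| + |p.eval x - g x| := abs_add_le _ _
    _ ≤ δ/2 + δ/2 := add_le_add (hq x hx) (hp x hx).le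
    _ = δ := by ring
  have hsup : ∀ x : ℝ, 0 ≤ x → |(g - e) x| ≤ δ := by
    intro x hx
    rw [Pi.sub_apply]
    rcases le_total x (n : ℝ) with h | h
    · have : e x = Polynomial.aeval x q := by
        show Polynomial.aeval x q * cutN n x = _
        rw [cutN_one hx h, mul_one]
      rw [this, abs_sub_comm]
      exact hqg x ⟨hx, by rw [hB]; linarith⟩
    · have hgx : g x = 0 := hgz x (hn.trans h)
      have hcut : |cutN n x| ≤ 1 := by
        rw [abs_of_nonneg (cutN_nonneg n x)]; exact cutN_le_one n x
      rcases le_total x B with h2 | h2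
      · have hb' : |Polynomial.aeval x q| ≤ δ := by
          have := hqg x ⟨hx, h2⟩; rwa [hgx, sub_zero] at this
        rw [hgx, zero_sub, abs_neg]
        calc |e x| = |Polynomial.aeval x q| * |cutN n x| := by rw [← abs_mul]; rfl
        _ ≤ δ * 1 := mul_le_mul hb' hcut (abs_nonneg _) hδ.le
        _ = δ := mul_one δ
      · have hzx : e x = 0 := by
          show Polynomial.aeval x q * cutN n x = 0
          rw [hB] at h2
          rw [cutN_zero h2, mul_zero]
        rw [hgx, hzx, sub_zero, abs_zero]; exact hδ.le
  have hzero2 : ∀ t : ℝ, B ≤ t → (g - e) t = 0 := by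
    intro t ht
    rw [Pi.sub_apply, hgz t (by rw [hB] at ht; linarith), 
      show e t = 0 from by show Polynomial.aeval t q * cutN n t = 0; rw [cutN_zero ht, mul_zero],
      sub_zero]
  have hecont : ContinuousOn e (Set.Ici 0) := (pcut_good q n).2.1
  have hgecont : ContinuousOn (g - e) (Set.Ici 0) := hg.2.1.sub hecont
  have hintb : ∀ x : ℝ, 0 ≤ x → |FI (g - e) x| ≤ δ * B := by
    have key : ∀ x : ℝ, 0 ≤ x → x ≤ B → |FI (g - e) x| ≤ δ * B := by
      intro x hx hxB
      have : ‖∫ t in (0:ℝ)..x, (g - e) t‖ ≤ δ * |x - 0| := by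
        apply intervalIntegral.norm_integral_le_of_norm_le_const
        intro t ht
        rw [Set.uIoc_of_le hx] at ht
        exact hsup t ht.1.le
      rw [sub_zero, abs_of_nonneg hx] at this
      calc |FI (g - e) x| ≤ δ * x := this
      _ ≤ δ * B := mul_le_mul_of_nonneg_left hxB hδ.le
    intro x hx
    rcases le_total x B with h | h
    · exact key x hx h
    · have hsplit := intervalIntegral.integral_add_adjacent_intervals
        (intInt hgecont le_rfl hB0) (intInt hgecont hB0 hx) (f := g - e) (μ := volume)
      have hz2 : (∫ t in B..x, (g - e) t) = 0 := by
        have : Set.EqOn (g - e) (fun _ => 0) (Set.uIcc B x) := by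
          intro t ht
          rw [Set.uIcc_of_le h] at ht
          exact hzero2 t ht.1
        rw [intervalIntegral.integral_congr this]; simp
      have : FI (g - e) x = FI (g - e) B := by
        show (∫ t in (0:ℝ)..x, (g - e) t) = ∫ t in (0:ℝ)..B, (g - e) t
        rw [← hsplit, hz2, add_zero]
      rw [this]
      exact key B hB0 le_rfl
  have hge : stmt15Norm (g - e) ≤ δ + δ * B := norm_le hsup hintb
  have hgeb : stmt15Norm (g - e) ≤ ε/4 := by
    refine hge.trans (le_of_eq ?_)
    rw [hδdef, hB]
    have h42 : ((n:ℝ) + 2) ≠ 0 := by positivity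
    field_simp
    ring
  refine ⟨e, he, ?_⟩
  have heq : f - e = (f - g) + (g - e) := by rw [sub_add_sub_cancel]
  have hgoodfg : Stmt15Good (f - g) := good_sub hf hg
  have hgoodge : Stmt15Good (g - e) := good_sub hg (pcut_good q n)
  calc stmt15Norm (f - e) = stmt15Norm ((f - g) + (g - e)) := by rw [heq]
  _ ≤ stmt15Norm (f - g) + stmt15Norm (g - e) := norm_triangle hgoodfg hgoodge
  _ < ε := by linarith

end S15

theorem stmt15 :
    ∃ V : Submodule ℝ (ℝ → ℝ), (V : Set (ℝ → ℝ)) = {f | Stmt15Good f} ∧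
      (∀ f, 0 ≤ stmt15Norm f) ∧
      (∀ f g, f ∈ V → g ∈ V → stmt15Norm (f + g) ≤ stmt15Norm f + stmt15Norm g) ∧
      (∀ (c : ℝ) (f : ℝ → ℝ), f ∈ V → stmt15Norm (c • f) = |c| * stmt15Norm f) ∧
      (∀ f ∈ V, (stmt15Norm f = 0 ↔ f = 0)) ∧
      (∀ u : ℕ → ℝ → ℝ, (∀ n, u n ∈ V) →
        (∀ ε : ℝ, 0 < ε → ∃ N₀ : ℕ, ∀ m ≥ N₀, ∀ n ≥ N₀, stmt15Norm (u m - u n) < ε) →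
        ∃ f ∈ V, Tendsto (fun n => stmt15Norm (u n - f)) atTop (nhds 0)) ∧
      (∃ D : Set (ℝ → ℝ), D.Countable ∧ D ⊆ (V : Set (ℝ → ℝ)) ∧
        ∀ f ∈ V, ∀ ε : ℝ, 0 < ε → ∃ g ∈ D, stmt15Norm (f - g) < ε) ∧
      (∀ f ∈ V, ∀ ε : ℝ, 0 < ε → ∃ g ∈ V,
        (∃ a : ℝ, ∀ x > a, g x = 0) ∧ stmt15Norm (f - g) < ε) := by
  classical
  refine ⟨{ carrier := {f | Stmt15Good f},
            add_mem' := fun {f g} hf hg => S15.good_add hf hg,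
            zero_mem' := S15.good_zero,
            smul_mem' := fun c {f} hf => S15.good_smul c hf }, rfl,
    S15.norm_nonneg', fun f g hf hg => S15.norm_triangle hf hg,
    fun c f _ => S15.norm_smul c f,
    fun f hf => S15.norm_zero_iff hf, ?_, ?_, ?_⟩
  · intro u hu hC
    obtain ⟨f, hf, ht⟩ := S15.complete u hu hC
    exact ⟨f, hf, ht⟩
  · exact ⟨S15.Dset, S15.Dset_countable, fun h hh => S15.Dset_good h hh,
      fun f hf ε hε => S15.dense_in_good f hf ε hε⟩
  · intro f hf ε hε
    obtain ⟨b, _, g, hg, hgz, hlt⟩ := S15.approx_support hf hε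
    exact ⟨g, hg, ⟨b, fun x hx => hgz x hx.le⟩, hlt⟩
end

section
/- Consider the Banach space CBL_s of sequences (f_k) of continuous, bounded, Lebesgue-integrable functions ℝ → ℝ with ‖f_k‖_∞ → 0 and sup_k ‖f_k‖₁ < ∞, normed by ‖(f_k)‖ = sup_k ‖f_k‖_∞ + sup_k ‖f_k‖₁. Then the set 𝓕 = {(f_k) ∈ CBL_s : ‖f_k‖₁ ↛ 0} of sequences failing the dominated convergence conclusion is spaceable in CBL_s: it contains, together with 0, an infinite-dimensional closed vector subspace. -/
open MeasureTheory Filter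

/-- Membership in the space `CBL_s`: sequences of continuous, bounded, integrable
functions `ℝ → ℝ` with `‖f_k‖_∞ → 0` and `sup_k ‖f_k‖₁ < ∞`. -/
def IsCBLs (u : ℕ → ℝ → ℝ) : Prop :=
  (∀ k, Continuous (u k)) ∧ (∀ k, ∃ M : ℝ, ∀ x, |u k x| ≤ M) ∧
  (∀ k, Integrable (u k)) ∧
  Tendsto (fun k => ⨆ x : ℝ, |u k x|) atTop (nhds 0) ∧
  ∃ M : ℝ, ∀ k, (∫ x, |u k x|) ≤ M

/-- The norm `‖(f_k)‖ = sup_k ‖f_k‖_∞ + sup_k ‖f_k‖₁` on `CBL_s`. -/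
noncomputable def cblNorm (u : ℕ → ℝ → ℝ) : ℝ :=
  (⨆ k, ⨆ x : ℝ, |u k x|) + ⨆ k, ∫ x, |u k x|

/-- Our candidate subspace: sequences determined by their first term via rescaling. -/
def memM (u : ℕ → ℝ → ℝ) : Prop :=
  Continuous (u 0) ∧ (∃ C : ℝ, ∀ x, |u 0 x| ≤ C) ∧ Integrable (u 0) ∧
  ∀ (k : ℕ) (x : ℝ), u k x = u 0 (x / (k + 1)) / (k + 1)

lemma kpos (k : ℕ) : (0:ℝ) < (k:ℝ) + 1 := by positivity

noncomputable def Msub : Submodule ℝ (ℕ → ℝ → ℝ) where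
  carrier := {u | memM u}
  zero_mem' := by
    refine ⟨continuous_const, ⟨0, by simp⟩, integrable_zero _ _ _, ?_⟩
    intro k x; simp
  add_mem' := by
    rintro u v ⟨hc, ⟨C, hC⟩, hi, hf⟩ ⟨hc', ⟨C', hC'⟩, hi', hf'⟩
    refine ⟨hc.add hc', ⟨C + C', fun x => ?_⟩, hi.add hi', fun k x => ?_⟩
    · exact (abs_add_le _ _).trans (add_le_add (hC x) (hC' x))
    · simp only [Pi.add_apply, hf k x, hf' k x]; ring
  smul_mem' := by
    rintro c u ⟨hc, ⟨C, hC⟩, hi, hf⟩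
    refine ⟨hc.const_smul c, ⟨|c| * C, fun x => ?_⟩, hi.smul c, fun k x => ?_⟩
    · simp only [Pi.smul_apply, smul_eq_mul, abs_mul]
      exact mul_le_mul_of_nonneg_left (hC x) (abs_nonneg c)
    · simp only [Pi.smul_apply, smul_eq_mul, hf k x]; ring

lemma memM_isCBLs (u : ℕ → ℝ → ℝ) (h : memM u) : IsCBLs u := by
  obtain ⟨hc, ⟨C, hC⟩, hi, hf⟩ := h
  have hC0 : 0 ≤ C := (abs_nonneg _).trans (hC 0)
  have huk : ∀ k, u k = fun x => u 0 (x / (k + 1)) / (k + 1) := fun k => funext (hf k)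
  have habs : ∀ (k : ℕ) (x : ℝ), |u k x| = |u 0 (x / (k+1))| / (k+1) := by
    intro k x
    rw [hf k x, abs_div, abs_of_pos (kpos k)]
  refine ⟨fun k => ?_, fun k => ⟨C, fun x => ?_⟩, fun k => ?_, ?_, ⟨∫ x, |u 0 x|, fun k => ?_⟩⟩
  · rw [huk k]
    exact (hc.comp (continuous_id.div_const _)).div_const _
  · rw [habs k x]
    calc |u 0 (x / (k+1))| / ((k:ℝ)+1) ≤ C / ((k:ℝ)+1) := by
          gcongr
          exact hC _
      _ ≤ C := by
          rw [div_le_iff₀ (kpos k)]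
          nlinarith [hC (x / ((k:ℝ)+1)), kpos k]
  · rw [huk k]
    exact ((integrable_comp_div_iff (u 0) (kpos k).ne').2 hi).div_const _
  · have hb : ∀ k : ℕ, (⨆ x : ℝ, |u k x|) ≤ C / (k + 1) := by
      intro k
      refine Real.iSup_le (fun x => ?_) (by positivity)
      rw [habs k x]
      gcongr
      exact hC _
    have hnn : ∀ k : ℕ, 0 ≤ ⨆ x : ℝ, |u k x| := fun k =>
      Real.iSup_nonneg fun x => abs_nonneg _
    have ht : Tendsto (fun k : ℕ => C / ((k:ℝ) + 1)) atTop (nhds 0) := by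
      have := tendsto_one_div_add_atTop_nhds_zero_nat.const_mul C
      simpa [div_eq_mul_inv, mul_comm, mul_assoc, one_div] using this
    exact squeeze_zero hnn hb ht
  · have : (∫ x, |u k x|) = ∫ x, |u 0 x| := by
      calc (∫ x, |u k x|) = ∫ x, |u 0 (x / (k+1))| / (k+1) := by
            congr 1; funext x; exact habs k x
        _ = (∫ x, |u 0 (x / (k+1))|) / (k+1) := integral_div _ _
        _ = (|(k:ℝ)+1| • ∫ x, |u 0 x|) / (k+1) := by
            rw [MeasureTheory.Measure.integral_comp_div (fun y => |u 0 y|)]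
        _ = ∫ x, |u 0 x| := by
            rw [abs_of_pos (kpos k), smul_eq_mul]
            field_simp
    rw [this]

lemma div_le_div_of_nonneg_right'' : True := trivial

/-- tent function centered at `3n`. -/
noncomputable def tent (n : ℕ) (x : ℝ) : ℝ := max 0 (1 - |x - 3 * n|)

lemma tent_cont (n : ℕ) : Continuous (tent n) :=
  continuous_const.max ((continuous_const.sub (continuous_id.sub continuous_const).abs))

lemma tent_abs_le (n : ℕ) (x : ℝ) : |tent n x| ≤ 1 := by
  rw [tent, abs_of_nonneg (le_max_left _ _)]
  simp only [max_le_iff]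
  constructor <;> [norm_num; skip]
  nlinarith [abs_nonneg (x - 3 * (n:ℝ))]

lemma tent_integrable (n : ℕ) : Integrable (tent n) := by
  apply (tent_cont n).integrable_of_hasCompactSupport
  apply HasCompactSupport.intro (isCompact_Icc (a := 3*(n:ℝ) - 1) (b := 3*(n:ℝ) + 1))
  intro x hx
  simp only [Set.mem_Icc, not_and_or, not_le] at hx
  rw [tent, max_eq_left]
  rcases hx with h | h
  · rw [abs_of_nonpos (by linarith)]; linarith
  · rw [abs_of_nonneg (by linarith)]; linarith

lemma tent_at (n m : ℕ) : tent n (3 * m) = if m = n then 1 else 0 := by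
  rw [tent]
  split_ifs with h
  · subst h; simp
  · rw [max_eq_left]
    have : (3:ℝ) ≤ |3 * (m:ℝ) - 3 * n| := by
      rcases lt_or_gt_of_ne h with hh | hh
      · have h1 : (m:ℝ) + 1 ≤ n := by exact_mod_cast hh
        rw [abs_of_nonpos (by linarith)]
        linarith
      · have h1 : (n:ℝ) + 1 ≤ m := by exact_mod_cast hh
        rw [abs_of_nonneg (by linarith)]
        linarith
    linarith

/-- the basic elements of the subspace -/
noncomputable def eM (n : ℕ) : ℕ → ℝ → ℝ := fun k x => tent n (x / (k + 1)) / (k + 1)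

lemma eM_mem (n : ℕ) : eM n ∈ Msub := by
  have h0 : eM n 0 = tent n := by
    funext x; simp [eM]
  refine ⟨by rw [h0]; exact tent_cont n, ⟨1, by rw [h0]; exact tent_abs_le n⟩,
    by rw [h0]; exact tent_integrable n, fun k x => by rw [h0]; rfl⟩

theorem stmt17 :
    ∃ M : Submodule ℝ (ℕ → ℝ → ℝ),
      (∀ u ∈ M, IsCBLs u) ∧
      (∀ u ∈ M, u ≠ 0 → ¬ Tendsto (fun k => ∫ x, |u k x|) atTop (nhds 0)) ∧
      Cardinal.aleph0 ≤ Module.rank ℝ M ∧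
      (∀ u : ℕ → ℝ → ℝ, IsCBLs u →
        (∀ ε : ℝ, 0 < ε → ∃ v ∈ M, cblNorm (u - v) < ε) → u ∈ M) := by
  refine ⟨Msub, fun u hu => memM_isCBLs u hu, ?_, ?_, ?_⟩
  · -- nonzero elements do not satisfy the DCT conclusion
    rintro u ⟨hc, hb, hi, hf⟩ hne hT
    have hconst : ∀ k, (∫ x, |u k x|) = ∫ x, |u 0 x| := by
      intro k
      have := (memM_isCBLs u ⟨hc, hb, hi, hf⟩)
      -- recompute as in memM_isCBLs; redo the computation
      have habs : ∀ (x : ℝ), |u k x| = |u 0 (x / (k+1))| / (k+1) := by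
        intro x; rw [hf k x, abs_div, abs_of_pos (kpos k)]
      calc (∫ x, |u k x|) = ∫ x, |u 0 (x / (k+1))| / (k+1) := by
            congr 1; funext x; exact habs x
        _ = (∫ x, |u 0 (x / (k+1))|) / (k+1) := integral_div _ _
        _ = (|(k:ℝ)+1| • ∫ x, |u 0 x|) / (k+1) := by
            rw [MeasureTheory.Measure.integral_comp_div (fun y => |u 0 y|)]
        _ = ∫ x, |u 0 x| := by
            rw [abs_of_pos (kpos k), smul_eq_mul]; field_simp
    have h0 : (∫ x, |u 0 x|) = 0 := by
      have : Tendsto (fun _ : ℕ => ∫ x, |u 0 x|) atTop (nhds 0) := by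
        refine hT.congr fun k => hconst k
      exact (tendsto_nhds_unique this tendsto_const_nhds).symm
    -- hence u 0 = 0 and then u = 0
    have hzero : u 0 = 0 := by
      have hae : (fun x => |u 0 x|) =ᵐ[volume] 0 := by
        refine (integral_eq_zero_iff_of_nonneg (fun x => abs_nonneg _) hi.abs).1 h0
      have : u 0 =ᵐ[volume] (0 : ℝ → ℝ) := by
        filter_upwards [hae] with x hx
        simpa [abs_eq_zero] using hx
      exact Continuous.ae_eq_iff_eq volume hc continuous_const |>.1 this
    apply hne
    funext k x
    rw [hf k x, hzero]
    simp
  · -- infinite rank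
    have hmemfam : ∀ n, eM n ∈ Msub := eM_mem
    set f : ℕ → Msub := fun n => ⟨eM n, eM_mem n⟩ with hfdef
    have hli : LinearIndependent ℝ f := by
      -- compose with evaluation at (0, 3 m)
      let φ : Msub →ₗ[ℝ] (ℕ → ℝ) :=
        (LinearMap.pi fun m : ℕ => (LinearMap.proj ((3:ℝ) * m)).comp
          (LinearMap.proj (R := ℝ) (φ := fun _ : ℕ => ℝ → ℝ) 0)).comp Msub.subtype
      have hφf : ∀ n, φ (f n) = fun m => if m = n then (1:ℝ) else 0 := by
        intro n
        funext m
        show eM n 0 (3 * m) = _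
        simp only [eM, Nat.cast_zero, zero_add, div_one]
        exact tent_at n m
      have hg : LinearIndependent ℝ (φ ∘ f) := by
        rw [linearIndependent_iff']
        intro s g hsum n hn
        have := congrFun hsum n
        simp only [Function.comp, hφf, Finset.sum_apply, Pi.smul_apply, smul_eq_mul,
          Pi.zero_apply] at this
        rw [Finset.sum_eq_single n (fun b _ hb => by simp [hb, Ne.symm hb]) (fun h => absurd hn h)] at this
        simpa using this
      exact LinearIndependent.of_comp φ hg
    simpa using hli.aleph0_le_rank
  · -- closedness
    rintro u ⟨huc, hub, hui, hut, huM⟩ happ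
    refine ⟨huc 0, hub 0, hui 0, ?_⟩
    intro k x
    by_contra hne
    set a : ℝ := u k x - u 0 (x / (k + 1)) / (k + 1) with ha
    have hane : a ≠ 0 := sub_ne_zero.2 hne
    have haeps : ∀ ε : ℝ, 0 < ε → |a| ≤ 2 * ε := by
      intro ε hε
      obtain ⟨v, hvM, hv⟩ := happ ε hε
      obtain ⟨hvc, ⟨C, hC⟩, hvi, hvf⟩ := hvM
      have hC0 : 0 ≤ C := (abs_nonneg _).trans (hC 0)
      -- uniform bound on u
      obtain ⟨K, hK⟩ := hut.bddAbove_range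
      have hKmem : ∀ j : ℕ, (⨆ y : ℝ, |u j y|) ≤ K := fun j =>
        hK ⟨j, rfl⟩
      have hubd : ∀ (j : ℕ) (y : ℝ), |u j y| ≤ K := by
        intro j y
        obtain ⟨Mj, hMj⟩ := hub j
        exact (le_ciSup ⟨Mj, fun r ⟨y', hy'⟩ => hy' ▸ hMj y'⟩ y).trans (hKmem j)
      have hvbd : ∀ (j : ℕ) (y : ℝ), |v j y| ≤ C := by
        intro j y
        rw [hvf j y, abs_div, abs_of_pos (kpos j)]
        rw [div_le_iff₀ (kpos j)]
        nlinarith [hC (y / ((j:ℝ)+1)), kpos j]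
      set D : ℝ := K + C with hD
      have hwbd : ∀ (j : ℕ) (y : ℝ), |(u - v) j y| ≤ D := by
        intro j y
        simp only [Pi.sub_apply]
        exact (abs_sub _ _).trans (add_le_add (hubd j y) (hvbd j y))
      have hD0 : 0 ≤ D := (abs_nonneg _).trans (hwbd 0 0)
      have hAle : ∀ j : ℕ, (⨆ y : ℝ, |(u - v) j y|) ≤ D := fun j =>
        Real.iSup_le (hwbd j) hD0
      have key : ∀ (j : ℕ) (y : ℝ), |(u - v) j y| < ε := by
        intro j y
        have h1 : |(u - v) j y| ≤ ⨆ y : ℝ, |(u - v) j y| :=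
          le_ciSup ⟨D, fun r ⟨y', hy'⟩ => hy' ▸ hwbd j y'⟩ y
        have h2 : (⨆ y : ℝ, |(u - v) j y|) ≤ ⨆ j : ℕ, ⨆ y : ℝ, |(u - v) j y| :=
          le_ciSup ⟨D, fun r ⟨j', hj'⟩ => hj' ▸ hAle j'⟩ j
        have h3 : (⨆ j : ℕ, ⨆ y : ℝ, |(u - v) j y|) ≤ cblNorm (u - v) := by
          have : (0:ℝ) ≤ ⨆ j : ℕ, ∫ y, |(u - v) j y| :=
            Real.iSup_nonneg fun j => integral_nonneg fun y => abs_nonneg _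
          unfold cblNorm
          linarith
        linarith [h1.trans (h2.trans h3)]
      have e1 : |u k x - v k x| < ε := by
        have := key k x; simpa using this
      have e2 : |u 0 (x / (k+1)) - v 0 (x / (k+1))| < ε := by
        have := key 0 (x / (k+1)); simpa using this
      have hvkx : v k x = v 0 (x / (k+1)) / (k+1) := hvf k x
      have : a = (u k x - v k x) + (v 0 (x / (k+1)) - u 0 (x / (k+1))) / (k+1) := by
        rw [ha, hvkx]; ring
      rw [this]
      have h4 : |(v 0 (x / (k+1)) - u 0 (x / (k+1))) / ((k:ℝ)+1)| ≤ ε := by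
        rw [abs_div, abs_of_pos (kpos k), div_le_iff₀ (kpos k)]
        rw [abs_sub_comm] at e2
        nlinarith [kpos k, abs_nonneg (v 0 (x / ((k:ℝ)+1)) - u 0 (x / ((k:ℝ)+1)))]
      calc |(u k x - v k x) + (v 0 (x / (k+1)) - u 0 (x / (k+1))) / ((k:ℝ)+1)|
          ≤ |u k x - v k x| + |(v 0 (x / (k+1)) - u 0 (x / (k+1))) / ((k:ℝ)+1)| := abs_add_le _ _
        _ ≤ 2 * ε := by linarith
    have : |a| ≤ 0 := by
      by_contra hpos
      push_neg at hpos
      have := haeps (|a| / 4) (by linarith)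
      linarith
    exact hane (abs_eq_zero.1 (le_antisymm this (abs_nonneg _)))
end

section
/- The map T : ℓ_∞ → CBL_s sending (a_k) to the sequence of tent functions f_k (where f_k is supported on [0,k], piecewise affine with peaks of height a_k/k on each unit interval) satisfies (1/2)‖(a_k)‖_{ℓ_∞} ≤ ‖T(a_k)‖ ≤ 2‖(a_k)‖_{ℓ_∞}; hence T is an isomorphism onto its image, and consequently the space CBL_s is not separable. -/
open MeasureTheory Filter

/-- The `k`-th tent-function: supported on `[0, k+1]`, piecewise affine, with a
triangular peak of height `a k / (k+1)` above each unit interval. -/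
noncomputable def tentSeq (a : ℕ → ℝ) (k : ℕ) (x : ℝ) : ℝ :=
  if 0 ≤ x ∧ x < (k + 1 : ℝ) then (a k / (k + 1)) * (1 - |2 * (x - (⌊x⌋ : ℝ)) - 1|) else 0



noncomputable def perF (x : ℝ) : ℝ := 1 - |2 * Int.fract x - 1|


lemma perF_nonneg (x : ℝ) : 0 ≤ perF x := by
  have h1 := Int.fract_nonneg x
  have h2 := Int.fract_lt_one x
  unfold perF; rw [sub_nonneg, abs_le]; constructor <;> nlinarith

lemma tentSeq_eq (a : ℕ → ℝ) (k : ℕ) (x : ℝ) :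
    tentSeq a k x = (a k / (k + 1)) * (if 0 ≤ x ∧ x < (k + 1 : ℝ) then perF x else 0) := by
  unfold tentSeq perF Int.fract
  split <;> simp

lemma tentSeq_eq_min (a : ℕ → ℝ) (k : ℕ) (x : ℝ) :
    tentSeq a k x = (a k / (k + 1)) *
      (min (perF x) (max 0 (min (2 * x) (2 * ((k + 1 : ℝ) - x))))) := by
  rw [tentSeq_eq]
  congr 1
  have hf0 := Int.fract_nonneg x
  have hf1 := Int.fract_lt_one x
  by_cases h : 0 ≤ x ∧ x < (k + 1 : ℝ)
  · rw [if_pos h]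
    obtain ⟨h0, h1⟩ := h
    have hfl : (0:ℝ) ≤ (⌊x⌋ : ℝ) := by
      have : (0:ℤ) ≤ ⌊x⌋ := Int.floor_nonneg.2 h0
      exact_mod_cast this
    have hfu : (⌊x⌋ : ℝ) + 1 ≤ (k + 1 : ℝ) := by
      have : ⌊x⌋ < (k : ℤ) + 1 := by
        rw [Int.floor_lt]; push_cast; linarith
      have : ⌊x⌋ + 1 ≤ (k : ℤ) + 1 := this
      exact_mod_cast this
    have hfr : Int.fract x = x - ⌊x⌋ := rfl
    have hp1 : perF x ≤ 2 * x := by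
      unfold perF
      have : 1 - 2 * Int.fract x ≤ |2 * Int.fract x - 1| := by
        rw [← neg_sub]; exact (neg_le_abs _).trans_eq' (by ring_nf)
      rw [hfr] at this ⊢
      nlinarith
    have hp2 : perF x ≤ 2 * ((k + 1 : ℝ) - x) := by
      unfold perF
      have : 2 * Int.fract x - 1 ≤ |2 * Int.fract x - 1| := le_abs_self _
      rw [hfr] at this ⊢
      nlinarith
    have := perF_nonneg x
    rw [min_eq_left]
    exact le_max_of_le_right (le_min hp1 hp2)
  · rw [if_neg h]
    push_neg at h
    have hcut : max 0 (min (2 * x) (2 * ((k + 1 : ℝ) - x))) = 0 := by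
      apply max_eq_left
      rcases lt_or_ge x 0 with hx | hx
      · exact le_trans (min_le_left _ _) (by linarith)
      · exact le_trans (min_le_right _ _) (by have := h hx; linarith)
    rw [hcut, min_eq_right (perF_nonneg x)]

lemma perF_le_one (x : ℝ) : perF x ≤ 1 := by
  unfold perF; have := abs_nonneg (2 * Int.fract x - 1); linarith

lemma perF_cont : Continuous perF := by
  have h : Continuous ((fun y : ℝ => 1 - |2 * y - 1|) ∘ Int.fract) := by
    apply ContinuousOn.comp_fract''
    · exact (continuous_const.sub ((continuous_const.mul continuous_id).sub
        continuous_const).abs).continuousOn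
    · norm_num
  exact h

lemma tentSeq_cont (a : ℕ → ℝ) (k : ℕ) : Continuous (tentSeq a k) := by
  have : tentSeq a k = fun x => (a k / (k + 1)) *
      (min (perF x) (max 0 (min (2 * x) (2 * ((k + 1 : ℝ) - x))))) := by
    funext x; exact tentSeq_eq_min a k x
  rw [this]
  exact continuous_const.mul (perF_cont.min (continuous_const.max
    ((continuous_const.mul continuous_id).min
      (continuous_const.mul (continuous_const.sub continuous_id)))))

lemma tentSeq_abs (a : ℕ → ℝ) (k : ℕ) (x : ℝ) :
    |tentSeq a k x| = (|a k| / (k + 1)) *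
      (if 0 ≤ x ∧ x < (k + 1 : ℝ) then perF x else 0) := by
  rw [tentSeq_eq, abs_mul, abs_div]
  congr 1
  · congr 1
    rw [abs_of_pos]; positivity
  · split
    · exact abs_of_nonneg (perF_nonneg x)
    · exact abs_zero

lemma tentSeq_bound (a : ℕ → ℝ) (k : ℕ) (x : ℝ) : |tentSeq a k x| ≤ |a k| / (k + 1) := by
  rw [tentSeq_abs]
  have h1 : (0:ℝ) ≤ |a k| / (k + 1) := by positivity
  split
  · nlinarith [perF_le_one x, perF_nonneg x]
  · simpa using h1

lemma tentSeq_sup (a : ℕ → ℝ) (k : ℕ) : (⨆ x : ℝ, |tentSeq a k x|) = |a k| / (k + 1) := by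
  apply le_antisymm
  · exact ciSup_le (tentSeq_bound a k)
  · have hb : BddAbove (Set.range fun x : ℝ => |tentSeq a k x|) :=
      ⟨|a k| / (k + 1), by rintro _ ⟨x, rfl⟩; exact tentSeq_bound a k x⟩
    have h12 : |tentSeq a k (1/2 : ℝ)| = |a k| / (k + 1) := by
      rw [tentSeq_abs]
      have hc : (0:ℝ) ≤ 1/2 ∧ (1/2 : ℝ) < (k + 1 : ℝ) := by
        constructor
        · norm_num
        · have : (0:ℝ) ≤ k := Nat.cast_nonneg k
          linarith
      rw [if_pos hc]
      have : Int.fract (1/2 : ℝ) = 1/2 := by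
        rw [Int.fract_eq_self]; norm_num
      unfold perF
      rw [this]; norm_num
    rw [← h12]
    exact le_ciSup hb (1/2 : ℝ)

lemma cont_tri : Continuous (fun x : ℝ => 1 - |2 * x - 1|) :=
  continuous_const.sub ((continuous_const.mul continuous_id).sub continuous_const).abs

lemma unit_integral : (∫ x in (0:ℝ)..1, (1 - |2 * x - 1|)) = 1/2 := by
  have h1 : (∫ x in (0:ℝ)..(1/2 : ℝ), (1 - |2 * x - 1|)) = 1/4 := by
    have he : Set.EqOn (fun x : ℝ => 1 - |2 * x - 1|) (fun x : ℝ => 2 * x)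
        (Set.uIcc (0:ℝ) (1/2)) := by
      intro x hx
      rw [Set.uIcc_of_le (by norm_num : (0:ℝ) ≤ 1/2)] at hx
      obtain ⟨hx0, hx1⟩ := hx
      simp only
      rw [abs_of_nonpos (by linarith)]; ring
    rw [intervalIntegral.integral_congr he, intervalIntegral.integral_const_mul,
      integral_id]
    norm_num
  have h2 : (∫ x in (1/2 : ℝ)..1, (1 - |2 * x - 1|)) = 1/4 := by
    have he : Set.EqOn (fun x : ℝ => 1 - |2 * x - 1|) (fun x : ℝ => 2 - 2 * x)
        (Set.uIcc (1/2 : ℝ) 1) := by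
      intro x hx
      rw [Set.uIcc_of_le (by norm_num : (1/2:ℝ) ≤ 1)] at hx
      obtain ⟨hx0, hx1⟩ := hx
      simp only
      rw [abs_of_nonneg (by linarith)]; ring
    rw [intervalIntegral.integral_congr he]
    have : (∫ x in (1/2 : ℝ)..1, (2 - 2 * x)) =
        (∫ x in (1/2 : ℝ)..1, (2:ℝ)) - ∫ x in (1/2 : ℝ)..1, 2 * x := by
      apply intervalIntegral.integral_sub
      · exact intervalIntegrable_const (μ := volume) (c := 2)
      · exact (continuous_const.mul continuous_id).intervalIntegrable (μ := volume) _ _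
    rw [this, intervalIntegral.integral_const_mul, integral_id,
      intervalIntegral.integral_const]
    norm_num
  rw [← intervalIntegral.integral_add_adjacent_intervals
    (cont_tri.intervalIntegrable (μ := volume) (0:ℝ) (1/2)) (cont_tri.intervalIntegrable (μ := volume) (1/2:ℝ) 1),
    h1, h2]
  norm_num

lemma perF_unit (n : ℕ) : (∫ x in (n:ℝ)..((n:ℝ)+1), perF x) = 1/2 := by
  have he : Set.EqOn perF (fun x : ℝ => 1 - |2 * (x - (n:ℝ)) - 1|)
      (Set.uIcc (n:ℝ) ((n:ℝ)+1)) := by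
    intro x hx
    rw [Set.uIcc_of_le (by linarith : (n:ℝ) ≤ (n:ℝ)+1)] at hx
    obtain ⟨hx0, hx1⟩ := hx
    rcases eq_or_lt_of_le hx1 with h | h
    · subst h
      unfold perF
      have : Int.fract ((n:ℝ)+1) = 0 := by
        rw [show ((n:ℝ)+1) = ((n+1 : ℕ) : ℝ) by push_cast; ring, Int.fract_natCast]
      rw [this]; norm_num
    · have : Int.fract x = x - (n:ℝ) := by
        have h1 : Int.fract (x - (n:ℤ)) = Int.fract x := Int.fract_sub_intCast x n
        rw [← h1, Int.fract_eq_self.2 ⟨by push_cast; linarith, by push_cast; linarith⟩]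
        push_cast; ring
      unfold perF
      rw [this]
  rw [intervalIntegral.integral_congr he,
    intervalIntegral.integral_comp_sub_right (fun x : ℝ => 1 - |2 * x - 1|) (n:ℝ)]
  simpa using unit_integral

lemma perF_int (n : ℕ) : (∫ x in (0:ℝ)..(n:ℝ), perF x) = n/2 := by
  induction n with
  | zero => simp
  | succ m ih =>
    have := intervalIntegral.integral_add_adjacent_intervals
      (perF_cont.intervalIntegrable (μ := volume) (0:ℝ) (m:ℝ))
      (perF_cont.intervalIntegrable (μ := volume) (m:ℝ) ((m:ℝ)+1))
    push_cast
    rw [← this, ih, perF_unit m]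
    ring

lemma tentSeq_integral (a : ℕ → ℝ) (k : ℕ) :
    (∫ x, |tentSeq a k x|) = |a k| / 2 := by
  have h1 : (fun x => |tentSeq a k x|) =
      fun x => (|a k| / (k + 1)) * (Set.Ico (0:ℝ) (k+1 : ℝ)).indicator perF x := by
    funext x
    rw [tentSeq_abs]
    congr 1
    rw [Set.indicator_apply]
    simp [Set.mem_Ico]
  rw [h1, MeasureTheory.integral_const_mul, MeasureTheory.integral_indicator measurableSet_Ico]
  have h2 : (∫ x in Set.Ico (0:ℝ) (k+1:ℝ), perF x) = ∫ x in (0:ℝ)..(k+1:ℝ), perF x := by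
    rw [MeasureTheory.integral_Ico_eq_integral_Ioo, ← MeasureTheory.integral_Ioc_eq_integral_Ioo,
      intervalIntegral.integral_of_le (by positivity : (0:ℝ) ≤ (k:ℝ)+1)]
  rw [h2]
  have h3 : (∫ x in (0:ℝ)..(k+1:ℝ), perF x) = ((k:ℝ)+1)/2 := by
    have := perF_int (k+1)
    push_cast at this
    convert this using 2
  rw [h3]
  have hk : ((k:ℝ)+1) ≠ 0 := by positivity
  field_simp


lemma tentSeq_integrable (a : ℕ → ℝ) (k : ℕ) : Integrable (tentSeq a k) := by
  apply Continuous.integrable_of_hasCompactSupport (tentSeq_cont a k)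
  apply HasCompactSupport.intro (isCompact_Icc (a := (0:ℝ)) (b := (k+1 : ℝ)))
  intro x hx
  rw [Set.mem_Icc] at hx
  push_neg at hx
  unfold tentSeq
  rw [if_neg]
  rintro ⟨h0, h1⟩
  exact absurd h1 (not_lt.2 (le_of_lt (hx h0)))

lemma isCBLs_tent (a : ℕ → ℝ) (M : ℝ) (hM : ∀ k, |a k| ≤ M) : IsCBLs (tentSeq a) := by
  refine ⟨tentSeq_cont a, fun k => ⟨|a k| / (k+1), tentSeq_bound a k⟩, tentSeq_integrable a,
    ?_, ⟨M/2, fun k => ?_⟩⟩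
  · have he : (fun k => ⨆ x : ℝ, |tentSeq a k x|) = fun k => |a k| / (k+1) := by
      funext k; exact tentSeq_sup a k
    rw [he]
    have ht : Tendsto (fun k : ℕ => M / ((k:ℝ)+1)) atTop (nhds 0) := by
      have h1 : Tendsto (fun n : ℕ => M / (n:ℝ)) atTop (nhds 0) :=
        tendsto_const_div_atTop_nhds_zero_nat M
      have h2 := h1.comp (tendsto_add_atTop_nat 1)
      convert h2 using 2 with k
      simp only [Function.comp]
      push_cast
      ring
    apply squeeze_zero (fun k => by positivity) (fun k => ?_) ht
    gcongr
    exact hM k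
  · rw [tentSeq_integral]
    linarith [hM k]


lemma tentSeq_sub (a b : ℕ → ℝ) (k : ℕ) (x : ℝ) :
    tentSeq a k x - tentSeq b k x = tentSeq (a - b) k x := by
  unfold tentSeq
  by_cases h : 0 ≤ x ∧ x < (k+1:ℝ)
  · rw [if_pos h, if_pos h, if_pos h, Pi.sub_apply]
    ring
  · rw [if_neg h, if_neg h, if_neg h]
    ring

lemma integral_abs_sub_le (p q : ℝ → ℝ) (hp : Integrable p) (hq : Integrable q) :
    (∫ x, |p x - q x|) ≤ (∫ x, |p x|) + ∫ x, |q x| := by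
  rw [← integral_add hp.abs hq.abs]
  exact integral_mono (hp.sub hq).abs (hp.abs.add hq.abs) fun x => abs_sub _ _

lemma le_cblNorm_of (u v : ℕ → ℝ → ℝ) (C : ℝ)
    (hC : ∀ k', (∫ x, |u k' x - v k' x|) ≤ C) (k : ℕ) :
    (∫ x, |u k x - v k x|) ≤ cblNorm (u - v) := by
  unfold cblNorm
  have h0 : 0 ≤ ⨆ k', ⨆ x : ℝ, |(u - v) k' x| :=
    Real.iSup_nonneg fun _ => Real.iSup_nonneg fun _ => abs_nonneg _
  have hbdd : BddAbove (Set.range fun k' => ∫ x, |(u - v) k' x|) :=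
    ⟨C, by rintro _ ⟨k', rfl⟩; simpa [Pi.sub_apply] using hC k'⟩
  have h2 : (∫ x, |u k x - v k x|) ≤ ⨆ k', ∫ x, |(u - v) k' x| := by
    have := le_ciSup hbdd k
    simpa [Pi.sub_apply] using this
  linarith


theorem stmt18 (a : ℕ → ℝ) (hb : ∃ M : ℝ, ∀ k, |a k| ≤ M) :
    IsCBLs (tentSeq a) ∧
    (1 / 2) * (⨆ k, |a k|) ≤ cblNorm (tentSeq a) ∧
    cblNorm (tentSeq a) ≤ 2 * (⨆ k, |a k|) ∧
    ¬ ∃ D : Set (ℕ → ℝ → ℝ), D.Countable ∧ (∀ v ∈ D, IsCBLs v) ∧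
      ∀ u : ℕ → ℝ → ℝ, IsCBLs u → ∀ ε : ℝ, 0 < ε → ∃ v ∈ D, cblNorm (u - v) < ε := by
  obtain ⟨M, hM⟩ := hb
  have hM0 : 0 ≤ M := le_trans (abs_nonneg _) (hM 0)
  have bddA : BddAbove (Set.range fun k => |a k|) := ⟨M, by rintro _ ⟨k, rfl⟩; exact hM k⟩
  have hle : ∀ k, |a k| ≤ ⨆ k, |a k| := fun k => le_ciSup bddA k
  have hA0 : 0 ≤ ⨆ k, ⨆ x : ℝ, |tentSeq a k x| :=
    Real.iSup_nonneg fun k => Real.iSup_nonneg fun x => abs_nonneg _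
  have hBdd : BddAbove (Set.range fun k => ∫ x, |tentSeq a k x|) :=
    ⟨M/2, by rintro _ ⟨k, rfl⟩; show (∫ x, |tentSeq a k x|) ≤ M/2; rw [tentSeq_integral]; linarith [hM k]⟩
  have hBk : ∀ k, |a k| / 2 ≤ ⨆ k, ∫ x, |tentSeq a k x| := fun k => by
    rw [← tentSeq_integral a k]; exact le_ciSup hBdd k
  refine ⟨isCBLs_tent a M hM, ?_, ?_, ?_⟩
  · unfold cblNorm
    have h2 : (⨆ k, |a k|) ≤ 2 * ⨆ k, ∫ x, |tentSeq a k x| :=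
      ciSup_le fun k => by linarith [hBk k]
    linarith
  · unfold cblNorm
    have hA : (⨆ k, ⨆ x : ℝ, |tentSeq a k x|) ≤ ⨆ k, |a k| := by
      apply ciSup_le
      intro k
      rw [tentSeq_sup]
      refine le_trans (div_le_self (abs_nonneg _) ?_) (hle k)
      have : (0:ℝ) ≤ (k:ℝ) := Nat.cast_nonneg k
      linarith
    have hB : (⨆ k, ∫ x, |tentSeq a k x|) ≤ ⨆ k, |a k| := by
      apply ciSup_le
      intro k
      rw [tentSeq_integral]
      linarith [hle k, abs_nonneg (a k)]
    linarith
  · rintro ⟨D, hDc, hD, hdense⟩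
    classical
    set A : Set ℕ → ℕ → ℝ := fun S k => if k ∈ S then 1 else 0 with hAdef
    have hAb : ∀ S k, |A S k| ≤ 1 := by
      intro S k; by_cases h : k ∈ S <;> simp [hAdef, h]
    have hch : ∀ S : Set ℕ, ∃ v ∈ D, cblNorm (tentSeq (A S) - v) < 1/8 := fun S =>
      hdense _ (isCBLs_tent _ 1 (hAb S)) (1/8) (by norm_num)
    choose v hv1 hv2 using hch
    haveI : Countable ↥D := hDc.to_subtype
    have hninj : ¬ Function.Injective (fun S => (⟨v S, hv1 S⟩ : ↥D)) := by
      intro hinj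
      haveI : Countable (Set ℕ) := hinj.countable
      obtain ⟨f, hf⟩ := Countable.exists_injective_nat (Set ℕ)
      exact Function.cantor_injective f hf
    rw [Function.not_injective_iff] at hninj
    obtain ⟨S, T, hST, hne⟩ := hninj
    have hSTv : v S = v T := congrArg Subtype.val hST
    obtain ⟨k, hk⟩ : ∃ k, A S k ≠ A T k := by
      by_contra h
      push_neg at h
      apply hne
      ext k
      have hk := h k
      by_cases hS : k ∈ S <;> by_cases hT : k ∈ T <;> simp [hAdef, hS, hT] at hk ⊢
    have hdk : |A S k - A T k| = 1 := by
      by_cases hS : k ∈ S <;> by_cases hT : k ∈ T <;> simp [hAdef, hS, hT] at hk ⊢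
    set w := v S with hwdef
    have hwCBL : IsCBLs w := hD _ (hv1 S)
    have hwI : ∀ k', Integrable (w k') := hwCBL.2.2.1
    obtain ⟨Mw, hMw⟩ := hwCBL.2.2.2.2
    have key : (∫ x, |tentSeq (A S) k x - tentSeq (A T) k x|) = 1/2 := by
      have hfun : (fun x => |tentSeq (A S) k x - tentSeq (A T) k x|) =
          fun x => |tentSeq (A S - A T) k x| := by
        funext x; rw [tentSeq_sub]
      rw [hfun, tentSeq_integral]
      simp only [Pi.sub_apply, hdk]
    have hfI := tentSeq_integrable (A S) k
    have hgI := tentSeq_integrable (A T) k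
    have hwIk := hwI k
    have tri : (1:ℝ)/2 ≤ (∫ x, |tentSeq (A S) k x - w k x|) +
        ∫ x, |tentSeq (A T) k x - w k x| := by
      rw [← key]
      have i0 : Integrable (fun x => |tentSeq (A S) k x - tentSeq (A T) k x|) :=
        (hfI.sub hgI).abs
      have i1 : Integrable (fun x => |tentSeq (A S) k x - w k x|) := (hfI.sub hwIk).abs
      have i2 : Integrable (fun x => |w k x - tentSeq (A T) k x|) := (hwIk.sub hgI).abs
      have i12 : Integrable (fun x => |tentSeq (A S) k x - w k x| + |w k x - tentSeq (A T) k x|) :=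
        i1.add i2
      have hmono := integral_mono i0 i12
        (fun x => abs_sub_le (tentSeq (A S) k x) (w k x) (tentSeq (A T) k x))
      rw [integral_add i1 i2] at hmono
      have hcomm : (fun x => |w k x - tentSeq (A T) k x|) =
          fun x => |tentSeq (A T) k x - w k x| := funext fun x => abs_sub_comm _ _
      rw [hcomm] at hmono
      exact hmono
    have hCb : ∀ (S' : Set ℕ) k', (∫ x, |tentSeq (A S') k' x - w k' x|) ≤ 1/2 + Mw :=
      fun S' k' => by
        refine le_trans (integral_abs_sub_le _ _ (tentSeq_integrable _ _) (hwI k')) ?_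
        rw [tentSeq_integral]
        have h1 := hMw k'
        have h2 := hAb S' k'
        linarith
    have b1 := le_cblNorm_of (tentSeq (A S)) w (1/2 + Mw) (hCb S) k
    have b2 := le_cblNorm_of (tentSeq (A T)) w (1/2 + Mw) (hCb T) k
    have c1 : cblNorm (tentSeq (A S) - w) < 1/8 := hv2 S
    have c2 : cblNorm (tentSeq (A T) - w) < 1/8 := by rw [hSTv]; exact hv2 T
    linarith
end
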